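/- arXiv:1505.04693 — 13 statements merged into one kernel-verified Lean document; each statement's English description precedes it below -/
import Mathlib

section
/- Let M ≥ 1 be an integer and k ≥ 1 an integer. Let C_1, …, C_k ≥ 0, T_1, …, T_k > 0 and D_k > 0 be real numbers, let U_i = C_i/T_i, and let Δ_k = max{U_k, C_k/D_k}. Suppose the index set {1, …, k−1} is partitioned into pairwise disjoint sets S_1, …, S_M (with union {1,…,k−1}), and the set {1, …, M} is partitioned into two disjoint sets M1 and M2 such that: for every m ∈ M1, C_k + Σ_{i∈S_m} (1 + D_k/T_i)·C_i > D_k, and for every m ∈ M2, U_k + Σ_{i∈S_m} U_i > 1. Then (3 − 1/M) · max{ Δ_k, (Σ_{i=1}^{k} U_i)/M, (Σ_{i=1}^{k} C_i)/(M·D_k) } > 1. -/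
/-- Arithmetic core of Theorem 2 (speedup factor `3 - 1/M` of
deadline-monotonic partitioning for arbitrary-deadline sporadic tasks
under the Fisher–Baruah–Baker linear schedulability test). -/
theorem stmt_0
    (M k : ℕ) (hM : 1 ≤ M) (hk : 1 ≤ k)
    (C T : ℕ → ℝ) (Dk : ℝ)
    (hC : ∀ i ∈ Finset.Icc 1 k, 0 ≤ C i)
    (hT : ∀ i ∈ Finset.Icc 1 k, 0 < T i)
    (hDk : 0 < Dk)
    (U : ℕ → ℝ) (hU : ∀ i, U i = C i / T i)
    (Δk : ℝ) (hΔk : Δk = max (U k) (C k / Dk))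
    (S : ℕ → Finset ℕ)
    (hSdisj : ∀ m ∈ Finset.Icc 1 M, ∀ m' ∈ Finset.Icc 1 M, m ≠ m' → Disjoint (S m) (S m'))
    (hSunion : (Finset.Icc 1 M).biUnion S = Finset.Icc 1 (k - 1))
    (M1 M2 : Finset ℕ)
    (hMdisj : Disjoint M1 M2)
    (hMunion : M1 ∪ M2 = Finset.Icc 1 M)
    (h1 : ∀ m ∈ M1, C k + ∑ i ∈ S m, (1 + Dk / T i) * C i > Dk)
    (h2 : ∀ m ∈ M2, U k + ∑ i ∈ S m, U i > 1) :
    (3 - 1 / (M : ℝ)) *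
      max Δk (max ((∑ i ∈ Finset.Icc 1 k, U i) / M)
        ((∑ i ∈ Finset.Icc 1 k, C i) / (M * Dk))) > 1 := by
  have hMpos : (0:ℝ) < (M:ℝ) := by exact_mod_cast Nat.lt_of_lt_of_le Nat.zero_lt_one hM
  set SU := ∑ i ∈ Finset.Icc 1 k, U i with hSU
  set SC := ∑ i ∈ Finset.Icc 1 k, C i with hSC
  set L := max Δk (max (SU / M) (SC / (M * Dk))) with hLdef
  have hkmem : k ∈ Finset.Icc 1 k := Finset.mem_Icc.mpr ⟨hk, le_refl k⟩
  have hCk : 0 ≤ C k := hC k hkmem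
  have hUk : 0 ≤ U k := by rw [hU k]; exact div_nonneg hCk (hT k hkmem).le
  -- per-processor inequality
  have key : ∀ m ∈ Finset.Icc 1 M, 1 < Δk + ∑ i ∈ S m, (U i + C i / Dk) := by
    intro m hm
    have hSm : ∀ i ∈ S m, i ∈ Finset.Icc 1 k := by
      intro i hi
      have h1' : i ∈ Finset.Icc 1 (k-1) := by
        rw [← hSunion]; exact Finset.mem_biUnion.mpr ⟨m, hm, hi⟩
      rw [Finset.mem_Icc] at h1' ⊢
      exact ⟨h1'.1, h1'.2.trans (Nat.sub_le k 1)⟩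
    have hm' : m ∈ M1 ∪ M2 := by rw [hMunion]; exact hm
    rcases Finset.mem_union.mp hm' with hm1 | hm2
    · have h := h1 m hm1
      have hsum : ∑ i ∈ S m, (U i + C i / Dk) = (∑ i ∈ S m, (1 + Dk / T i) * C i) / Dk := by
        rw [Finset.sum_div]
        refine Finset.sum_congr rfl fun i hi => ?_
        have hTi : T i ≠ 0 := ne_of_gt (hT i (hSm i hi))
        rw [hU i]; field_simp; ring
      have hlt : 1 < C k / Dk + ∑ i ∈ S m, (U i + C i / Dk) := by
        rw [hsum, ← add_div, lt_div_iff₀ hDk]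
        linarith
      have hΔ : C k / Dk ≤ Δk := by rw [hΔk]; exact le_max_right _ _
      linarith
    · have h := h2 m hm2
      have hΔ : U k ≤ Δk := by rw [hΔk]; exact le_max_left _ _
      have hle : ∑ i ∈ S m, U i ≤ ∑ i ∈ S m, (U i + C i / Dk) := by
        refine Finset.sum_le_sum fun i hi => ?_
        have h0 := div_nonneg (hC i (hSm i hi)) hDk.le
        linarith
      linarith
  -- sum the per-processor inequalities
  have hne : (Finset.Icc 1 M).Nonempty := ⟨1, Finset.mem_Icc.mpr ⟨le_refl 1, hM⟩⟩
  have hsum1 : (M:ℝ) < ∑ m ∈ Finset.Icc 1 M, (Δk + ∑ i ∈ S m, (U i + C i / Dk)) := by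
    have h := Finset.sum_lt_sum_of_nonempty hne key
    simpa [Finset.sum_const, Nat.card_Icc] using h
  have hdisj' : (↑(Finset.Icc 1 M) : Set ℕ).PairwiseDisjoint S := by
    intro a ha b hb hab
    exact hSdisj a (by exact_mod_cast ha) b (by exact_mod_cast hb) hab
  have hdouble : ∑ m ∈ Finset.Icc 1 M, ∑ i ∈ S m, (U i + C i / Dk)
      = ∑ i ∈ Finset.Icc 1 (k-1), (U i + C i / Dk) := by
    rw [← Finset.sum_biUnion hdisj', hSunion]
  have hk1 : k - 1 + 1 = k := Nat.succ_pred_eq_of_pos hk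
  have hsplit : ∑ i ∈ Finset.Icc 1 k, (U i + C i / Dk)
      = ∑ i ∈ Finset.Icc 1 (k-1), (U i + C i / Dk) + (U k + C k / Dk) := by
    have h := Finset.sum_Icc_succ_top (a := 1) (b := k - 1)
      (by omega) (fun i => U i + C i / Dk)
    rw [hk1] at h
    exact h
  have hSUsplit : ∑ i ∈ Finset.Icc 1 k, (U i + C i / Dk) = SU + SC / Dk := by
    rw [hSU, hSC, Finset.sum_add_distrib, Finset.sum_div]
  -- main accumulated inequality
  have hmain : (M:ℝ) < (M:ℝ) * Δk + (SU + SC / Dk - (U k + C k / Dk)) := by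
    rw [Finset.sum_add_distrib, Finset.sum_const, Nat.card_Icc, hdouble] at hsum1
    simp only [Nat.add_sub_cancel, nsmul_eq_mul] at hsum1
    have : ∑ i ∈ Finset.Icc 1 (k-1), (U i + C i / Dk) = SU + SC / Dk - (U k + C k / Dk) := by
      rw [← hSUsplit, hsplit]; ring
    linarith [this ▸ hsum1]
  -- bounds by L
  have hΔL : Δk ≤ L := le_max_left _ _
  have hSUL : SU ≤ M * L := by
    have h := le_trans (le_max_left _ _) (le_max_right Δk (max (SU / M) (SC / (M * Dk))))
    calc SU = M * (SU / M) := by field_simp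
      _ ≤ M * L := by exact mul_le_mul_of_nonneg_left h hMpos.le
  have hSCL : SC / Dk ≤ M * L := by
    have h := le_trans (le_max_right _ _) (le_max_right Δk (max (SU / M) (SC / (M * Dk))))
    have h2' : SC ≤ M * L * Dk := by
      have := mul_le_mul_of_nonneg_left h (mul_pos hMpos hDk).le
      calc SC = (M * Dk) * (SC / (M * Dk)) := by field_simp
        _ ≤ (M * Dk) * L := this
        _ = M * L * Dk := by ring
    rw [div_le_iff₀ hDk]; linarith
  have hΔge : Δk ≤ U k + C k / Dk := by
    rw [hΔk]
    have h0 : 0 ≤ C k / Dk := div_nonneg hCk hDk.le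
    rcases max_cases (U k) (C k / Dk) with ⟨he, _⟩ | ⟨he, _⟩ <;> rw [he] <;> linarith
  -- conclude
  have hfin : (M:ℝ) < (3 * M - 1) * L := by
    nlinarith [mul_le_mul_of_nonneg_left hΔL (show (0:ℝ) ≤ (M:ℝ) - 1 by rw [sub_nonneg]; exact_mod_cast hM)]
  rw [gt_iff_lt, show (3 - 1 / (M:ℝ)) * L = ((3 * M - 1) * L) / M by field_simp,
    lt_div_iff₀ hMpos]
  linarith
end

section
/- Let M ≥ 1 be an integer and k ≥ 1 an integer. Let C_1, …, C_k ≥ 0, T_1, …, T_k > 0 and D_k > 0 be real numbers, let U_i = C_i/T_i, and let Δ_k = max{U_k, C_k/D_k}. Suppose the index set {1, …, k−1} is partitioned into pairwise disjoint sets S_1, …, S_M (with union {1,…,k−1}), and the set {1, …, M} is partitioned into two disjoint sets M1 and M2 such that: for every m ∈ M1, C_k + D_k·(Σ_{i∈S_m} U_i) + Σ_{i∈S_m} C_i − Σ_{i∈S_m} U_i·C_i > D_k, and for every m ∈ M2, U_k + Σ_{i∈S_m} U_i > 1. Then (3 − 1/M) · max{ Δ_k, (Σ_{i=1}^{k} U_i)/M,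 (Σ_{i=1}^{k} C_i)/(M·D_k) } > 1. -/
/-- Arithmetic core of Corollary 1 (speedup factor `3 - 1/M` of
deadline-monotonic partitioning for arbitrary-deadline sporadic tasks
under the response-time bound of Bini et al.). -/
theorem stmt_1
    (M k : ℕ) (hM : 1 ≤ M) (hk : 1 ≤ k)
    (C T : ℕ → ℝ) (Dk : ℝ)
    (hC : ∀ i ∈ Finset.Icc 1 k, 0 ≤ C i)
    (hT : ∀ i ∈ Finset.Icc 1 k, 0 < T i)
    (hDk : 0 < Dk)
    (U : ℕ → ℝ) (hU : ∀ i, U i = C i / T i)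
    (Δk : ℝ) (hΔk : Δk = max (U k) (C k / Dk))
    (S : ℕ → Finset ℕ)
    (hSdisj : ∀ m ∈ Finset.Icc 1 M, ∀ m' ∈ Finset.Icc 1 M, m ≠ m' → Disjoint (S m) (S m'))
    (hSunion : (Finset.Icc 1 M).biUnion S = Finset.Icc 1 (k - 1))
    (M1 M2 : Finset ℕ)
    (hMdisj : Disjoint M1 M2)
    (hMunion : M1 ∪ M2 = Finset.Icc 1 M)
    (h1 : ∀ m ∈ M1,
      C k + Dk * (∑ i ∈ S m, U i) + (∑ i ∈ S m, C i) - (∑ i ∈ S m, U i * C i) > Dk)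
    (h2 : ∀ m ∈ M2, U k + ∑ i ∈ S m, U i > 1) :
    (3 - 1 / (M : ℝ)) *
      max Δk (max ((∑ i ∈ Finset.Icc 1 k, U i) / M)
        ((∑ i ∈ Finset.Icc 1 k, C i) / (M * Dk))) > 1 := by
  have hkk : k ∈ Finset.Icc 1 k := by simp [hk]
  have hk1 : k - 1 + 1 = k := Nat.succ_pred_eq_of_pos hk
  have hsub : Finset.Icc 1 (k-1) ⊆ Finset.Icc 1 k :=
    Finset.Icc_subset_Icc le_rfl (Nat.sub_le k 1)
  have hU0 : ∀ i ∈ Finset.Icc 1 k, 0 ≤ U i := fun i hi => by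
    rw [hU]; exact div_nonneg (hC i hi) (hT i hi).le
  have hSm : ∀ m ∈ Finset.Icc 1 M, S m ⊆ Finset.Icc 1 k := fun m hm => by
    refine (Finset.subset_biUnion_of_mem S hm).trans ?_
    rw [hSunion]; exact hsub
  have hM1sub : M1 ⊆ Finset.Icc 1 M := hMunion ▸ Finset.subset_union_left
  have hM2sub : M2 ⊆ Finset.Icc 1 M := hMunion ▸ Finset.subset_union_right
  set g : ℕ → ℝ := fun m =>
    if m ∈ M1 then C k / Dk + (∑ i ∈ S m, U i) + (∑ i ∈ S m, C i) / Dk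
    else U k + ∑ i ∈ S m, U i with hg
  -- step 2 : M < sum g
  have step2 : (M:ℝ) < ∑ m ∈ Finset.Icc 1 M, g m := by
    have h := Finset.sum_lt_sum_of_nonempty (s := Finset.Icc 1 M)
      (f := fun _ => (1:ℝ)) (g := g) ⟨1, by simp [hM]⟩ ?_
    · simpa using h
    · intro m hm
      by_cases hm1 : m ∈ M1
      · simp only [hg, if_pos hm1]
        have hh := h1 m hm1
        have hS := hSm m (hM1sub hm1)
        have hUC : 0 ≤ ∑ i ∈ S m, U i * C i :=
          Finset.sum_nonneg fun i hi => mul_nonneg (hU0 i (hS hi)) (hC i (hS hi))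
        rw [show C k / Dk + (∑ i ∈ S m, U i) + (∑ i ∈ S m, C i) / Dk
            = (C k + Dk * (∑ i ∈ S m, U i) + (∑ i ∈ S m, C i)) / Dk by
          field_simp, lt_div_iff₀ hDk]
        linarith
      · have hm2 : m ∈ M2 := by
          have := hMunion ▸ hm
          rcases Finset.mem_union.mp this with h | h
          · exact absurd h hm1
          · exact h
        simp only [hg, if_neg hm1]
        exact h2 m hm2
  -- step 3 : split
  have step3 : ∑ m ∈ Finset.Icc 1 M, g m
      = ∑ m ∈ M1, (C k / Dk + (∑ i ∈ S m, U i) + (∑ i ∈ S m, C i) / Dk)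
        + ∑ m ∈ M2, (U k + ∑ i ∈ S m, U i) := by
    rw [← hMunion, Finset.sum_union hMdisj]
    congr 1
    · exact Finset.sum_congr rfl fun m hm => by simp [hg, hm]
    · refine Finset.sum_congr rfl fun m hm => ?_
      have : m ∉ M1 := fun h => (Finset.disjoint_left.mp hMdisj h) hm
      simp [hg, this]
  -- biUnion sums
  have hpair : (↑(Finset.Icc 1 M) : Set ℕ).PairwiseDisjoint S :=
    fun m hm m' hm' hne => hSdisj m hm m' hm' hne
  have hUsum : (∑ m ∈ M1, ∑ i ∈ S m, U i) + ∑ m ∈ M2, ∑ i ∈ S m, U i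
      = ∑ i ∈ Finset.Icc 1 (k-1), U i := by
    rw [← Finset.sum_union hMdisj, hMunion, ← hSunion, Finset.sum_biUnion hpair]
  have hUtot : ∑ i ∈ Finset.Icc 1 k, U i = (∑ i ∈ Finset.Icc 1 (k-1), U i) + U k := by
    have := Finset.sum_Icc_succ_top (a := 1) (b := k - 1) (by omega) U
    rw [hk1] at this; exact this
  have hCtot : ∑ i ∈ Finset.Icc 1 k, C i = (∑ i ∈ Finset.Icc 1 (k-1), C i) + C k := by
    have := Finset.sum_Icc_succ_top (a := 1) (b := k - 1) (by omega) C
    rw [hk1] at this; exact this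
  have hCsum : (∑ m ∈ M1, ∑ i ∈ S m, C i) ≤ ∑ i ∈ Finset.Icc 1 (k-1), C i := by
    rw [← hSunion, Finset.sum_biUnion hpair]
    refine Finset.sum_le_sum_of_subset_of_nonneg hM1sub fun m hm _ => ?_
    exact Finset.sum_nonneg fun i hi => hC i (hSm m hm hi)
  -- cardinalities
  have hcard : (M1.card : ℝ) + M2.card = M := by
    have : M1.card + M2.card = M := by
      rw [← Finset.card_union_of_disjoint hMdisj, hMunion, Nat.card_Icc]; omega
    exact_mod_cast this
  have hm1nn : (0:ℝ) ≤ M1.card := by positivity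
  have hm2nn : (0:ℝ) ≤ M2.card := by positivity
  have hd1 : C k / Dk ≤ Δk := hΔk ▸ le_max_right _ _
  have hd2 : U k ≤ Δk := hΔk ▸ le_max_left _ _
  -- key inequality
  have key : (M:ℝ) < ((M:ℝ) - 1) * Δk + (∑ i ∈ Finset.Icc 1 k, U i)
      + (∑ i ∈ Finset.Icc 1 k, C i) / Dk := by
    have e1 : ∑ m ∈ M1, (C k / Dk + (∑ i ∈ S m, U i) + (∑ i ∈ S m, C i) / Dk)
        = M1.card * (C k / Dk) + (∑ m ∈ M1, ∑ i ∈ S m, U i)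
          + (∑ m ∈ M1, ∑ i ∈ S m, C i) / Dk := by
      rw [Finset.sum_add_distrib, Finset.sum_add_distrib, Finset.sum_const,
        ← Finset.sum_div, nsmul_eq_mul]
    have e2 : ∑ m ∈ M2, (U k + ∑ i ∈ S m, U i)
        = M2.card * U k + ∑ m ∈ M2, ∑ i ∈ S m, U i := by
      rw [Finset.sum_add_distrib, Finset.sum_const, nsmul_eq_mul]
    have hCd : (∑ m ∈ M1, ∑ i ∈ S m, C i) / Dk
        ≤ ((∑ i ∈ Finset.Icc 1 k, C i) - C k) / Dk := by
      gcongr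
      linarith [hCsum, hCtot]
    have hb1 : (M1.card:ℝ) * (C k / Dk) ≤ M1.card * Δk :=
      mul_le_mul_of_nonneg_left hd1 hm1nn
    have hb2 : (M2.card:ℝ) * U k ≤ M2.card * Δk :=
      mul_le_mul_of_nonneg_left hd2 hm2nn
    have hb3 : (M1.card:ℝ) * Δk + M2.card * Δk = M * Δk := by
      rw [← add_mul, hcard]
    have hck0 : 0 ≤ C k / Dk := div_nonneg (hC k hkk) hDk.le
    have huk0 : 0 ≤ U k := hU0 k hkk
    have hdle : Δk ≤ U k + C k / Dk := by
      rw [hΔk]; exact max_le (by linarith) (by linarith)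
    have hsd : ((∑ i ∈ Finset.Icc 1 k, C i) - C k) / Dk
        = (∑ i ∈ Finset.Icc 1 k, C i) / Dk - C k / Dk := sub_div _ _ _
    rw [step3, e1, e2] at step2
    linarith [step2, hUsum, hUtot, hCd]
  -- conclude
  set X := max Δk (max ((∑ i ∈ Finset.Icc 1 k, U i) / M)
      ((∑ i ∈ Finset.Icc 1 k, C i) / (M * Dk))) with hX
  have hMpos : (0:ℝ) < M := by exact_mod_cast hM
  have hX1 : Δk ≤ X := le_max_left _ _
  have hX2 : (∑ i ∈ Finset.Icc 1 k, U i) ≤ M * X := by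
    have h : (∑ i ∈ Finset.Icc 1 k, U i) / M ≤ X :=
      le_trans (le_max_left ((∑ i ∈ Finset.Icc 1 k, U i) / M)
        ((∑ i ∈ Finset.Icc 1 k, C i) / (M * Dk))) (le_max_right Δk _)
    calc (∑ i ∈ Finset.Icc 1 k, U i)
        = M * ((∑ i ∈ Finset.Icc 1 k, U i) / M) := by field_simp
      _ ≤ M * X := mul_le_mul_of_nonneg_left h hMpos.le
  have hX3 : (∑ i ∈ Finset.Icc 1 k, C i) / Dk ≤ M * X := by
    have h : (∑ i ∈ Finset.Icc 1 k, C i) / (M * Dk) ≤ X :=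
      le_trans (le_max_right ((∑ i ∈ Finset.Icc 1 k, U i) / M)
        ((∑ i ∈ Finset.Icc 1 k, C i) / (M * Dk))) (le_max_right Δk _)
    calc (∑ i ∈ Finset.Icc 1 k, C i) / Dk
        = M * ((∑ i ∈ Finset.Icc 1 k, C i) / (M * Dk)) := by
          field_simp
      _ ≤ M * X := mul_le_mul_of_nonneg_left h hMpos.le
  have hM1 : (1:ℝ) ≤ M := by exact_mod_cast hM
  have hkey2 : (M:ℝ) < (3 * M - 1) * X := by nlinarith [key, hX1, hX2, hX3]
  rw [gt_iff_lt, ← mul_lt_mul_iff_of_pos_right hMpos]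
  have : (3 - 1 / (M:ℝ)) * X * M = (3 * M - 1) * X := by
    field_simp
  rw [this]
  linarith
end

section
/- Let k ≥ 1 be an integer, let C > 0, α > 0 and β > 0 be real numbers, let U_1, …, U_{k−1} > 0 be reals, and let 0 < t_1 ≤ t_2 ≤ … ≤ t_k be reals. If C/t_k ≤ (α/β + 1)/(∏_{j=1}^{k−1} (β·U_j + 1)) − α/β, then there exists an index j ∈ {1, …, k} such that C + Σ_{i=1}^{k−1} α·t_i·U_i + Σ_{i=1}^{j−1} β·t_i·U_i ≤ t_j. -/
/-- Lemma 2 of the paper: the key lemma of the k²U schedulability-test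
framework of Chen, Huang and Liu. -/
theorem stmt_2
    (k : ℕ) (hk : 1 ≤ k)
    (C α β : ℝ) (hC : 0 < C) (hα : 0 < α) (hβ : 0 < β)
    (U : ℕ → ℝ) (hU : ∀ i ∈ Finset.Icc 1 (k - 1), 0 < U i)
    (t : ℕ → ℝ) (ht1 : 0 < t 1)
    (htmono : ∀ i ∈ Finset.Icc 1 k, ∀ j ∈ Finset.Icc 1 k, i ≤ j → t i ≤ t j)
    (hcond : C / t k ≤
      (α / β + 1) / (∏ j ∈ Finset.Icc 1 (k - 1), (β * U j + 1)) - α / β) :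
    ∃ j ∈ Finset.Icc 1 k,
      C + (∑ i ∈ Finset.Icc 1 (k - 1), α * t i * U i) +
        (∑ i ∈ Finset.Icc 1 (j - 1), β * t i * U i) ≤ t j := by
  by_contra hcon
  push_neg at hcon
  have hmem1 : (1:ℕ) ∈ Finset.Icc 1 k := by simp [hk]
  have htpos : ∀ i ∈ Finset.Icc 1 k, 0 < t i := by
    intro i hi
    exact lt_of_lt_of_le ht1 (htmono 1 hmem1 i hi (Finset.mem_Icc.mp hi).1)
  have hsub : Finset.Icc 1 (k-1) ⊆ Finset.Icc 1 k :=
    Finset.Icc_subset_Icc_right (Nat.sub_le k 1)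
  set G := α / β with hG
  have hGpos : 0 < G := div_pos hα hβ
  set A := ∑ i ∈ Finset.Icc 1 (k-1), α * t i * U i with hA
  set S := ∑ i ∈ Finset.Icc 1 (k-1), β * t i * U i with hSdef
  set P := ∏ j ∈ Finset.Icc 1 (k-1), (β * U j + 1) with hP
  have hAS : A = G * S := by
    rw [hA, hSdef, Finset.mul_sum, hG]
    refine Finset.sum_congr rfl fun i hi => ?_
    field_simp
  have hS0 : 0 ≤ S := Finset.sum_nonneg fun i hi => by
    have h1 := hU i hi
    have h2 := htpos i (hsub hi)
    positivity
  have hA0 : 0 ≤ A := by rw [hAS]; positivity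
  have hPpos : 0 < P := Finset.prod_pos fun i hi => by nlinarith [hU i hi]
  have htk : 0 < t k := htpos k (by simp [hk])
  -- key induction
  have key : ∀ m, m ≤ k - 1 →
      (∑ i ∈ Finset.Icc 1 m, β * t i * U i) ≤
        (C + A) * ((∏ i ∈ Finset.Icc 1 m, (β * U i + 1)) - 1) := by
    intro m
    induction m with
    | zero => intro _; simp
    | succ n ih =>
      intro hn
      have ihn := ih (Nat.le_of_succ_le hn)
      have hmem : n + 1 ∈ Finset.Icc 1 k := by
        simp only [Finset.mem_Icc]
        omega
      have hfail := hcon (n+1) hmem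
      simp only [Nat.add_sub_cancel] at hfail
      rw [Finset.sum_Icc_succ_top (by omega : 1 ≤ n+1),
          Finset.prod_Icc_succ_top (by omega : 1 ≤ n+1)]
      have hUn : 0 < U (n+1) := hU (n+1) (by simp only [Finset.mem_Icc]; omega)
      have htn : 0 < t (n+1) := htpos (n+1) hmem
      have hbU : 0 < β * U (n+1) := mul_pos hβ hUn
      have hCA : 0 < C + A := by linarith
      nlinarith [mul_lt_mul_of_pos_left hfail hbU,
        mul_le_mul_of_nonneg_right ihn (by linarith : (0:ℝ) ≤ β * U (n+1) + 1)]
  have hS : S ≤ (C + A) * (P - 1) := by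
    have := key (k-1) le_rfl
    rw [← hSdef, ← hP] at this
    exact this
  have hfk := hcon k (by simp [hk])
  rw [← hSdef] at hfk
  -- hfk : t k < C + A + S
  rw [hAS] at hS hfk
  have hcond' : C ≤ ((G+1)/P - G) * t k := (div_le_iff₀ htk).mp hcond
  have h3 : C * P ≤ t k * (1 - G*(P-1)) := by
    have e : ((G+1)/P - G) * t k * P = t k * (1 - G*(P-1)) := by
      field_simp
      ring
    calc C * P ≤ ((G+1)/P - G) * t k * P :=
          mul_le_mul_of_nonneg_right hcond' hPpos.le
      _ = _ := e
  have h4 : 0 < 1 - G*(P-1) := by nlinarith [mul_pos hC hPpos]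
  have hSx : S * (1 - G*(P-1)) ≤ C * (P-1) := by nlinarith [hS]
  nlinarith [mul_lt_mul_of_pos_right hfk h4,
    mul_le_mul_of_nonneg_left hSx (by linarith : (0:ℝ) ≤ G + 1), h3]
end

section
/- Let k ≥ 1 be an integer, let 0 < t_1 ≤ t_2 ≤ … ≤ t_k be reals, let A be a real number, let β > 0, and let u_1, …, u_{k−1} ≥ 0 be reals. If for every j ∈ {1, …, k} one has t_j < A + β·Σ_{i=1}^{j−1} t_i·u_i, then A > 0 and t_k < A·∏_{i=1}^{k−1} (1 + β·u_i); equivalently, A/t_k > 1/∏_{i=1}^{k−1} (1 + β·u_i). -/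
/-- The extreme-point lemma underlying Corollary 4: if every one of the `k`
test points of a k-point effective schedulability test is violated, then
`A > 0` and `t k < A * ∏ (1 + β * u i)`, equivalently `A / t k > 1 / ∏ (1 + β * u i)`. -/
theorem stmt_3
    (k : ℕ) (hk : 1 ≤ k)
    (t : ℕ → ℝ) (ht1 : 0 < t 1)
    (htmono : ∀ i ∈ Finset.Icc 1 k, ∀ j ∈ Finset.Icc 1 k, i ≤ j → t i ≤ t j)
    (A β : ℝ) (hβ : 0 < β)
    (u : ℕ → ℝ) (hu : ∀ i ∈ Finset.Icc 1 (k - 1), 0 ≤ u i)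
    (hviol : ∀ j ∈ Finset.Icc 1 k,
      t j < A + β * ∑ i ∈ Finset.Icc 1 (j - 1), t i * u i) :
    0 < A ∧ t k < A * ∏ i ∈ Finset.Icc 1 (k - 1), (1 + β * u i) ∧
      A / t k > 1 / ∏ i ∈ Finset.Icc 1 (k - 1), (1 + β * u i) := by
  have h1 := hviol 1 (by simp [hk])
  simp at h1
  have hA : 0 < A := lt_trans ht1 h1
  have key : ∀ j, j ≤ k - 1 →
      A + β * ∑ i ∈ Finset.Icc 1 j, t i * u i ≤
        A * ∏ i ∈ Finset.Icc 1 j, (1 + β * u i) := by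
    intro j
    induction j with
    | zero => simp
    | succ n ih =>
      intro hle
      have ihn := ih (Nat.le_of_succ_le hle)
      have hun : 0 ≤ u (n + 1) := hu _ (by simp; omega)
      have htv := hviol (n + 1) (by simp; omega)
      have h1' : t (n + 1) ≤ A + β * ∑ i ∈ Finset.Icc 1 n, t i * u i := by
        simpa using htv.le
      rw [Finset.sum_Icc_succ_top (by omega : 1 ≤ n + 1),
        Finset.prod_Icc_succ_top (by omega : 1 ≤ n + 1)]
      nlinarith [mul_le_mul_of_nonneg_right ihn hun,
        mul_le_mul_of_nonneg_right h1' (mul_nonneg hβ.le hun)]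
  have htk : t k < A * ∏ i ∈ Finset.Icc 1 (k - 1), (1 + β * u i) :=
    lt_of_lt_of_le (hviol k (by simp [hk])) (key (k - 1) le_rfl)
  have hP : 0 < ∏ i ∈ Finset.Icc 1 (k - 1), (1 + β * u i) := by
    apply Finset.prod_pos
    intro i hi
    have := hu i hi
    nlinarith
  have htkpos : 0 < t k := lt_of_lt_of_le ht1
    (htmono 1 (by simp [hk]) k (by simp [hk]) hk)
  refine ⟨hA, htk, ?_⟩
  rw [gt_iff_lt, div_lt_div_iff₀ hP htkpos]
  linarith
end

section
/- Let M ≥ 1 and k ≥ 1 be integers. Let C_1, …, C_k > 0, T_1, …, T_{k−1} > 0 and D_k > 0 be reals, and put U_i = C_i/T_i. Let T*1 = { i < k : T_i < D_k } and T*2 = { i < k : T_i ≥ D_k }, and let C_k' = C_k + (Σ_{i∈T*2} C_i)/M. Suppose that for every real t with 0 < t ≤ D_k one has C_k + (Σ_{i=1}^{k−1} ⌈t/T_i⌉·C_i)/M > t. Then C_k'/D_k + (Σ_{i∈T*1} ⌊D_k/T_i⌋·T_i·U_i)/(M·D_k) > 1/∏_{i∈T*1} (1 + U_i/M). -/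
private lemma aux_ind (M : ℝ) (hM : 0 < M) (g C U : ℕ → ℝ) :
    ∀ S : Finset ℕ, ∀ A : ℝ,
      (∀ i ∈ S, 0 < g i) →
      (∀ i ∈ S, 0 ≤ U i) →
      (∀ i ∈ S, C i ≤ U i * g i) →
      (∀ i ∈ S, g i < A + (∑ j ∈ S.filter (fun j => g j < g i), C j) / M) →
      A + (∑ j ∈ S, C j) / M ≤ A * ∏ i ∈ S, (1 + U i / M) := by
  intro S
  induction S using Finset.strongInduction with
  | _ S ih =>
    intro A hg hU hCU h2
    rcases S.eq_empty_or_nonempty with rfl | hne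
    · simp
    obtain ⟨i₀, hi₀, hmin⟩ := S.exists_min_image g hne
    have hS : S = insert i₀ (S.erase i₀) := (Finset.insert_erase hi₀).symm
    have hi₀S' : i₀ ∉ S.erase i₀ := Finset.notMem_erase _ _
    have hAi₀ : g i₀ < A := by
      have h := h2 i₀ hi₀
      have hz : S.filter (fun j => g j < g i₀) = ∅ :=
        Finset.filter_eq_empty_iff.mpr (fun j hj => not_lt.mpr (hmin j hj))
      rw [hz] at h; simpa using h
    have hApos : 0 < A := (hg i₀ hi₀).trans hAi₀
    have hU₀ : 0 ≤ U i₀ := hU i₀ hi₀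
    have hC₀ : C i₀ ≤ U i₀ * A :=
      (hCU i₀ hi₀).trans (mul_le_mul_of_nonneg_left hAi₀.le hU₀)
    have hAA' : A + C i₀ / M ≤ A * (1 + U i₀ / M) := by
      have h : C i₀ / M ≤ U i₀ * A / M := by gcongr
      have heq : A * (1 + U i₀ / M) = A + U i₀ * A / M := by ring
      linarith
    have hAle : A ≤ A * (1 + U i₀ / M) := by
      nlinarith [div_nonneg hU₀ hM.le]
    have h2' : ∀ i ∈ S.erase i₀,
        g i < A * (1 + U i₀ / M) +
          (∑ j ∈ (S.erase i₀).filter (fun j => g j < g i), C j) / M := by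
      intro i hi
      have hiS : i ∈ S := Finset.mem_of_mem_erase hi
      have h := h2 i hiS
      rw [hS, Finset.filter_insert] at h
      by_cases hgi : g i₀ < g i
      · rw [if_pos hgi, Finset.sum_insert (fun hmem => hi₀S' (Finset.mem_of_mem_filter _ hmem)),
          add_div] at h
        linarith [hAA']
      · rw [if_neg hgi] at h
        linarith [hAle]
    have hIH := ih (S.erase i₀) (Finset.erase_ssubset hi₀) (A * (1 + U i₀ / M))
      (fun i hi => hg i (Finset.mem_of_mem_erase hi))
      (fun i hi => hU i (Finset.mem_of_mem_erase hi))
      (fun i hi => hCU i (Finset.mem_of_mem_erase hi))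
      h2'
    calc A + (∑ j ∈ S, C j) / M
        = A + C i₀ / M + (∑ j ∈ S.erase i₀, C j) / M := by
          rw [← Finset.add_sum_erase S C hi₀, add_div]; ring
      _ ≤ A * (1 + U i₀ / M) + (∑ j ∈ S.erase i₀, C j) / M := by linarith [hAA']
      _ ≤ A * (1 + U i₀ / M) * ∏ i ∈ S.erase i₀, (1 + U i / M) := hIH
      _ = A * ∏ i ∈ S, (1 + U i / M) := by
          rw [← Finset.mul_prod_erase S _ hi₀]; ring

/-- Corollary 4 of the paper, in the form used in the proof of Theorem 5:
if the averaged TDA test fails at every point `t ∈ (0, D_k]`, then the workload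
`C_k'/D_k + (∑_{i∈T*1} ⌊D_k/T_i⌋ T_i U_i)/(M D_k)` exceeds `1/∏_{i∈T*1}(1 + U_i/M)`. -/
theorem stmt_4
    (M k : ℕ) (hM : 1 ≤ M) (hk : 1 ≤ k)
    (C T : ℕ → ℝ) (Dk : ℝ)
    (hC : ∀ i ∈ Finset.Icc 1 k, 0 < C i)
    (hT : ∀ i ∈ Finset.Icc 1 (k - 1), 0 < T i)
    (hDk : 0 < Dk)
    (U : ℕ → ℝ) (hU : ∀ i, U i = C i / T i)
    (T1 T2 : Finset ℕ)
    (hT1 : T1 = (Finset.Icc 1 (k - 1)).filter (fun i => T i < Dk))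
    (hT2 : T2 = (Finset.Icc 1 (k - 1)).filter (fun i => Dk ≤ T i))
    (Ck' : ℝ) (hCk' : Ck' = C k + (∑ i ∈ T2, C i) / M)
    (hfail : ∀ t : ℝ, 0 < t → t ≤ Dk →
      C k + (∑ i ∈ Finset.Icc 1 (k - 1), (⌈t / T i⌉ : ℝ) * C i) / M > t) :
    Ck' / Dk + (∑ i ∈ T1, (⌊Dk / T i⌋ : ℝ) * T i * U i) / (M * Dk) >
      1 / ∏ i ∈ T1, (1 + U i / M) := by
  have hMR : (0:ℝ) < M := by exact_mod_cast hM
  have hCpos : ∀ i ∈ Finset.Icc 1 (k-1), 0 < C i := by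
    intro i hi
    apply hC
    simp only [Finset.mem_Icc] at *
    omega
  have hT1mem : ∀ i ∈ T1, i ∈ Finset.Icc 1 (k-1) ∧ T i < Dk := by
    intro i hi; rw [hT1, Finset.mem_filter] at hi; exact hi
  have hT2mem : ∀ i ∈ T2, i ∈ Finset.Icc 1 (k-1) ∧ Dk ≤ T i := by
    intro i hi; rw [hT2, Finset.mem_filter] at hi; exact hi
  set g : ℕ → ℝ := fun i => (⌊Dk / T i⌋ : ℝ) * T i with hgdef
  have hfloor1 : ∀ i ∈ T1, (1:ℤ) ≤ ⌊Dk / T i⌋ := by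
    intro i hi
    obtain ⟨hiI, hiD⟩ := hT1mem i hi
    have hTp := hT i hiI
    apply Int.le_floor.mpr
    rw [Int.cast_one, le_div_iff₀ hTp]
    linarith
  have hgpos : ∀ i ∈ T1, 0 < g i := by
    intro i hi
    have hTp := hT i (hT1mem i hi).1
    have h1 := hfloor1 i hi
    have h2 : (1:ℝ) ≤ (⌊Dk / T i⌋ : ℝ) := by exact_mod_cast h1
    simp only [hgdef]
    nlinarith
  have hgle : ∀ i ∈ T1, g i ≤ Dk := by
    intro i hi
    have hTp := hT i (hT1mem i hi).1
    have h := Int.floor_le (Dk / T i)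
    calc (⌊Dk / T i⌋ : ℝ) * T i ≤ (Dk / T i) * T i :=
          mul_le_mul_of_nonneg_right h hTp.le
      _ = Dk := by field_simp
  have hUpos : ∀ i ∈ T1, 0 < U i := by
    intro i hi
    rw [hU]
    exact div_pos (hCpos i (hT1mem i hi).1) (hT i (hT1mem i hi).1)
  have hCUg : ∀ i ∈ T1, C i ≤ U i * g i := by
    intro i hi
    have hTp := hT i (hT1mem i hi).1
    have hCp := hCpos i (hT1mem i hi).1
    have h1 : (1:ℝ) ≤ (⌊Dk / T i⌋ : ℝ) := by exact_mod_cast hfloor1 i hi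
    have : U i * g i = (⌊Dk / T i⌋ : ℝ) * C i := by
      rw [hU, hgdef]; field_simp
    rw [this]
    nlinarith
  set A : ℝ := C k + (∑ j ∈ T2, C j)/M + (∑ j ∈ T1, (⌊Dk / T j⌋ : ℝ) * C j)/M with hAdef
  -- ceiling facts
  have hceilT2 : ∀ t : ℝ, 0 < t → t ≤ Dk → ∀ j ∈ T2, (⌈t / T j⌉ : ℝ) = 1 := by
    intro t ht htD j hj
    obtain ⟨hjI, hjD⟩ := hT2mem j hj
    have hTp := hT j hjI
    have h1 : ⌈t / T j⌉ = 1 := by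
      have hpos : 0 < t / T j := div_pos ht hTp
      have hle : t / T j ≤ 1 := by
        rw [div_le_one hTp]; linarith
      have := Int.ceil_pos.mpr hpos
      have := Int.ceil_le.mpr (by simpa using hle : t / T j ≤ ((1:ℤ):ℝ))
      omega
    rw [h1]; norm_num
  have hceilLow : ∀ t : ℝ, ∀ j ∈ T1, t ≤ g j → (⌈t / T j⌉ : ℝ) ≤ (⌊Dk / T j⌋ : ℝ) := by
    intro t j hj htg
    have hTp := hT j (hT1mem j hj).1
    have : t / T j ≤ ((⌊Dk / T j⌋ : ℤ) : ℝ) := by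
      rw [div_le_iff₀ hTp]; exact htg
    exact_mod_cast Int.ceil_le.mpr this
  have hceilHigh : ∀ t : ℝ, t ≤ Dk → ∀ j ∈ T1, (⌈t / T j⌉ : ℝ) ≤ (⌊Dk / T j⌋ : ℝ) + 1 := by
    intro t htD j hj
    have hTp := hT j (hT1mem j hj).1
    have : t / T j ≤ ((⌊Dk / T j⌋ + 1 : ℤ) : ℝ) := by
      push_cast
      have h2 : Dk / T j < (⌊Dk / T j⌋ : ℝ) + 1 := Int.lt_floor_add_one _
      have h3 : t / T j ≤ Dk / T j := (div_le_div_iff_of_pos_right hTp).mpr htD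
      linarith
    have := Int.ceil_le.mpr this
    exact_mod_cast this
  -- key bound: failure at any t gives t < A + (sum over tasks with g j < t)/M
  have key : ∀ t : ℝ, 0 < t → t ≤ Dk →
      t < A + (∑ j ∈ T1.filter (fun j => g j < t), C j) / M := by
    intro t ht htD
    have hf := hfail t ht htD
    have hsplit : (∑ i ∈ Finset.Icc 1 (k-1), (⌈t / T i⌉ : ℝ) * C i)
        = (∑ i ∈ T1, (⌈t / T i⌉ : ℝ) * C i) + (∑ i ∈ T2, (⌈t / T i⌉ : ℝ) * C i) := by
      rw [hT1, hT2]
      rw [← Finset.sum_filter_add_sum_filter_not (Finset.Icc 1 (k-1))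
        (fun i => T i < Dk) (fun i => (⌈t / T i⌉ : ℝ) * C i)]
      congr 1
      apply Finset.sum_congr _ (fun _ _ => rfl)
      apply Finset.filter_congr
      intro x hx
      simp [not_lt]
    have hS2 : (∑ i ∈ T2, (⌈t / T i⌉ : ℝ) * C i) = ∑ i ∈ T2, C i := by
      apply Finset.sum_congr rfl
      intro j hj
      rw [hceilT2 t ht htD j hj, one_mul]
    have hS1 : (∑ i ∈ T1, (⌈t / T i⌉ : ℝ) * C i)
        ≤ (∑ j ∈ T1, (⌊Dk / T j⌋ : ℝ) * C j) + (∑ j ∈ T1.filter (fun j => g j < t), C j) := by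
      rw [← Finset.sum_filter_add_sum_filter_not T1 (fun j => g j < t)
        (fun i => (⌈t / T i⌉ : ℝ) * C i),
        ← Finset.sum_filter_add_sum_filter_not T1 (fun j => g j < t)
        (fun j => (⌊Dk / T j⌋ : ℝ) * C j)]
      have hb1 : (∑ i ∈ T1.filter (fun j => g j < t), (⌈t / T i⌉ : ℝ) * C i)
          ≤ (∑ j ∈ T1.filter (fun j => g j < t), (⌊Dk / T j⌋ : ℝ) * C j)
            + (∑ j ∈ T1.filter (fun j => g j < t), C j) := by
        rw [← Finset.sum_add_distrib]
        apply Finset.sum_le_sum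
        intro j hj
        have hjT1 : j ∈ T1 := Finset.mem_of_mem_filter _ hj
        have hb := hceilHigh t htD j hjT1
        have hCp := (hCpos j (hT1mem j hjT1).1).le
        nlinarith
      have hb2 : (∑ i ∈ T1.filter (fun j => ¬ g j < t), (⌈t / T i⌉ : ℝ) * C i)
          ≤ (∑ j ∈ T1.filter (fun j => ¬ g j < t), (⌊Dk / T j⌋ : ℝ) * C j) := by
        apply Finset.sum_le_sum
        intro j hj
        rw [Finset.mem_filter] at hj
        have hb := hceilLow t j hj.1 (not_lt.mp hj.2)
        have hCp := (hCpos j (hT1mem j hj.1).1).le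
        nlinarith
      linarith
    rw [hsplit, hS2] at hf
    have hdiv : ((∑ i ∈ T1, (⌈t / T i⌉ : ℝ) * C i) + ∑ i ∈ T2, C i) / M
        ≤ ((∑ j ∈ T1, (⌊Dk / T j⌋ : ℝ) * C j) + (∑ j ∈ T1.filter (fun j => g j < t), C j)
            + ∑ i ∈ T2, C i) / M := by
      gcongr <;> linarith [hS1]
    calc t < C k + ((∑ i ∈ T1, (⌈t / T i⌉ : ℝ) * C i) + ∑ i ∈ T2, C i) / M := hf
      _ ≤ C k + ((∑ j ∈ T1, (⌊Dk / T j⌋ : ℝ) * C j)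
            + (∑ j ∈ T1.filter (fun j => g j < t), C j) + ∑ i ∈ T2, C i) / M := by
          linarith [hdiv]
      _ = A + (∑ j ∈ T1.filter (fun j => g j < t), C j) / M := by
          rw [hAdef]; ring
  -- apply the induction lemma
  have hmain := aux_ind M hMR g C U T1 A hgpos (fun i hi => (hUpos i hi).le) hCUg
    (fun i hi => key (g i) (hgpos i hi) (hgle i hi))
  have hprodpos : 0 < ∏ i ∈ T1, (1 + U i / M) := by
    apply Finset.prod_pos
    intro i hi
    have := hUpos i hi
    positivity
  have hDlt : Dk < A * ∏ i ∈ T1, (1 + U i / M) := by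
    have h1 := key Dk hDk le_rfl
    have h2 : (∑ j ∈ T1.filter (fun j => g j < Dk), C j) ≤ ∑ j ∈ T1, C j := by
      apply Finset.sum_le_sum_of_subset_of_nonneg (Finset.filter_subset _ _)
      intro j hj _
      exact (hCpos j (hT1mem j hj).1).le
    have h3 : (∑ j ∈ T1.filter (fun j => g j < Dk), C j) / M ≤ (∑ j ∈ T1, C j) / M := by
      gcongr <;> exact h2
    linarith
  -- finish: rewrite LHS as A / Dk
  have hLHS : Ck' / Dk + (∑ i ∈ T1, (⌊Dk / T i⌋ : ℝ) * T i * U i) / (M * Dk) = A / Dk := by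
    have hsum : (∑ i ∈ T1, (⌊Dk / T i⌋ : ℝ) * T i * U i)
        = ∑ j ∈ T1, (⌊Dk / T j⌋ : ℝ) * C j := by
      apply Finset.sum_congr rfl
      intro j hj
      have hTp := (hT j (hT1mem j hj).1).ne'
      rw [hU]
      field_simp
    rw [hsum, hCk', hAdef]
    field_simp
  rw [hLHS, gt_iff_lt, div_lt_div_iff₀ hprodpos hDk, one_mul]
  exact hDlt
end

section
/- Let M ≥ 1 and k ≥ 1 be integers. Let C_1, …, C_k > 0, T_1, …, T_{k−1} > 0 and D_k > 0 be reals, and put U_i = C_i/T_i. Let T*1 = { i < k : T_i < D_k } and T*2 = { i < k : T_i ≥ D_k }, and let C_k' = C_k + (Σ_{i∈T*2} C_i)/M. If ∏_{i∈T*1} (1 + U_i/M) ≤ 2/(1 + C_k'/D_k), then there exists a real t with 0 < t ≤ D_k such that C_k + (Σ_{i=1}^{k−1} ⌈t/T_i⌉·C_i)/M ≤ t. -/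
open Finset

private lemma coreA (u s : ℕ → ℝ) (S : Finset ℕ) :
    ∀ (c : ℝ), 0 < c → (∀ j ∈ S, 0 < u j) → (∀ j ∈ S, 0 < s j) →
      (∀ i ∈ S, s i < c + (∑ j ∈ S, u j * s j) +
        ∑ j ∈ S.filter (fun j => toLex (s j, j) < toLex (s i, i)), u j * s j) →
      (2 - ∏ j ∈ S, (1 + u j)) * (∑ j ∈ S, u j * s j) ≤ c * ((∏ j ∈ S, (1 + u j)) - 1) := by
  induction S using Finset.strongInduction with
  | _ S ih =>
    intro c hc hu hs hcon
    rcases S.eq_empty_or_nonempty with rfl | hne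
    · simp
    obtain ⟨m, hmS, hmin⟩ := S.exists_min_image (fun j => toLex (s j, j)) hne
    set S' := S.erase m with hS'
    have hSS : S = insert m S' := (Finset.insert_erase hmS).symm
    have hmS' : m ∉ S' := Finset.notMem_erase m S
    have hsub : S' ⊂ S := Finset.erase_ssubset hmS
    have hum : 0 < u m := hu m hmS
    have hsm : 0 < s m := hs m hmS
    set a := u m * s m with ha
    set σ' := ∑ j ∈ S', u j * s j with hσ'
    set P' := ∏ j ∈ S', (1 + u j) with hP'
    have hσsplit : ∑ j ∈ S, u j * s j = a + σ' := by
      rw [hSS, Finset.sum_insert hmS']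
    have hPsplit : ∏ j ∈ S, (1 + u j) = (1 + u m) * P' := by
      rw [hSS, Finset.prod_insert hmS']
    have hσ'nonneg : 0 ≤ σ' := by
      rw [hσ']
      exact Finset.sum_nonneg fun j hj =>
        le_of_lt (mul_pos (hu j (Finset.mem_of_mem_erase hj)) (hs j (Finset.mem_of_mem_erase hj)))
    have hP'1 : 1 ≤ P' := by
      rw [hP']
      calc (1:ℝ) = ∏ _j ∈ S', (1:ℝ) := by simp
      _ ≤ ∏ j ∈ S', (1 + u j) := by
        apply Finset.prod_le_prod (fun j hj => by norm_num)
        intro j hj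
        have := hu j (Finset.mem_of_mem_erase hj); linarith
    have hfilm : S.filter (fun j => toLex (s j, j) < toLex (s m, m)) = ∅ := by
      apply Finset.filter_false_of_mem
      intro j hj
      exact not_lt.mpr (hmin j hj)
    have Hm : s m < c + (a + σ') := by
      have h := hcon m hmS
      rw [hfilm, hσsplit] at h
      simpa using h
    have hapos : 0 < a := mul_pos hum hsm
    have IH : (2 - P') * σ' ≤ (c + 2 * a) * (P' - 1) := by
      apply ih S' hsub (c + 2 * a) (by linarith)
        (fun j hj => hu j (Finset.mem_of_mem_erase hj))
        (fun j hj => hs j (Finset.mem_of_mem_erase hj))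
      intro i hiS'
      have hiS : i ∈ S := Finset.mem_of_mem_erase hiS'
      have hne' : m ≠ i := (Finset.ne_of_mem_erase hiS').symm
      have hmlt : toLex ((s m, m) : ℝ × ℕ) < toLex (s i, i) := by
        refine lt_of_le_of_ne (hmin i hiS) ?_
        intro h
        have : (s m, m) = (s i, i) := by exact_mod_cast h
        exact hne' (congrArg Prod.snd this)
      have hfil : S.filter (fun j => toLex (s j, j) < toLex (s i, i))
          = insert m (S'.filter (fun j => toLex (s j, j) < toLex (s i, i))) := by
        rw [hSS, Finset.filter_insert, if_pos hmlt]
      have hci := hcon i hiS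
      rw [hσsplit, hfil, Finset.sum_insert
        (fun h => hmS' (Finset.mem_of_mem_filter m h))] at hci
      linarith
    have stepP : P' * (a - u m * a - u m * σ') ≤ P' * (c * u m) := by
      apply mul_le_mul_of_nonneg_left _ (by linarith)
      nlinarith [mul_lt_mul_of_pos_left Hm hum]
    rw [hσsplit, hPsplit]
    nlinarith [IH, stepP]

/-- Theorem 4 of the paper: the hyperbolic-bound condition guarantees that
task `τ_k` passes the averaged time-demand-analysis test at some point
`t ∈ (0, D_k]`. -/
theorem stmt_5
    (M k : ℕ) (hM : 1 ≤ M) (hk : 1 ≤ k)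
    (C T : ℕ → ℝ) (Dk : ℝ)
    (hC : ∀ i ∈ Finset.Icc 1 k, 0 < C i)
    (hT : ∀ i ∈ Finset.Icc 1 (k - 1), 0 < T i)
    (hDk : 0 < Dk)
    (U : ℕ → ℝ) (hU : ∀ i, U i = C i / T i)
    (T1 T2 : Finset ℕ)
    (hT1 : T1 = (Finset.Icc 1 (k - 1)).filter (fun i => T i < Dk))
    (hT2 : T2 = (Finset.Icc 1 (k - 1)).filter (fun i => Dk ≤ T i))
    (Ck' : ℝ) (hCk' : Ck' = C k + (∑ i ∈ T2, C i) / M)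
    (hhyp : (∏ i ∈ T1, (1 + U i / M)) ≤ 2 / (1 + Ck' / Dk)) :
    ∃ t : ℝ, 0 < t ∧ t ≤ Dk ∧
      C k + (∑ i ∈ Finset.Icc 1 (k - 1), (⌈t / T i⌉ : ℝ) * C i) / M ≤ t := by
  by_contra hcontra
  push_neg at hcontra
  have hM0 : (0:ℝ) < (M:ℝ) := by exact_mod_cast Nat.lt_of_lt_of_le Nat.zero_lt_one hM
  have hsubIcc : Finset.Icc 1 (k-1) ⊆ Finset.Icc 1 k :=
    Finset.Icc_subset_Icc_right (Nat.sub_le k 1)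
  have hCpos : ∀ i ∈ Finset.Icc 1 (k-1), 0 < C i := fun i hi => hC i (hsubIcc hi)
  have hCk : 0 < C k := hC k (Finset.mem_Icc.mpr ⟨hk, le_rfl⟩)
  have hT1sub : T1 ⊆ Finset.Icc 1 (k-1) := hT1 ▸ Finset.filter_subset _ _
  have hT2sub : T2 ⊆ Finset.Icc 1 (k-1) := hT2 ▸ Finset.filter_subset _ _
  have hCk'pos : 0 < Ck' := by
    rw [hCk']
    have : 0 ≤ ∑ i ∈ T2, C i :=
      Finset.sum_nonneg fun i hi => (hCpos i (hT2sub hi)).le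
    positivity
  -- the functions for the core lemma
  set u : ℕ → ℝ := fun j => C j / ((M:ℝ) * T j) with hu_def
  set s : ℕ → ℝ := fun j => ((⌊Dk / T j⌋ : ℤ) : ℝ) * T j with hs_def
  have hTpos : ∀ j ∈ T1, 0 < T j := fun j hj => hT j (hT1sub hj)
  have hTD : ∀ j ∈ T1, T j < Dk := fun j hj => by
    rw [hT1] at hj
    exact (Finset.mem_filter.mp hj).2
  have hfl1 : ∀ j ∈ T1, (1:ℝ) ≤ ((⌊Dk / T j⌋ : ℤ) : ℝ) := by
    intro j hj
    have h1 : (1:ℤ) ≤ ⌊Dk / T j⌋ := by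
      rw [Int.le_floor]
      push_cast
      rw [le_div_iff₀ (hTpos j hj)]
      have := hTD j hj
      linarith
    exact_mod_cast h1
  have hsT : ∀ j ∈ T1, T j ≤ s j := by
    intro j hj
    have h := mul_le_mul_of_nonneg_right (hfl1 j hj) (hTpos j hj).le
    simpa [hs_def] using h
  have hspos : ∀ j ∈ T1, 0 < s j := fun j hj => lt_of_lt_of_le (hTpos j hj) (hsT j hj)
  have hsD : ∀ j ∈ T1, s j ≤ Dk := by
    intro j hj
    have hT0 := hTpos j hj
    have h := Int.floor_le (Dk / T j)
    calc s j = ((⌊Dk / T j⌋ : ℤ) : ℝ) * T j := rfl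
    _ ≤ (Dk / T j) * T j := mul_le_mul_of_nonneg_right h hT0.le
    _ = Dk := div_mul_cancel₀ _ (ne_of_gt hT0)
  have hupos : ∀ j ∈ T1, 0 < u j := fun j hj =>
    div_pos (hCpos j (hT1sub hj)) (mul_pos hM0 (hTpos j hj))
  have hus : ∀ j ∈ T1, u j * s j = ((⌊Dk / T j⌋ : ℤ) : ℝ) * C j / (M:ℝ) := by
    intro j hj
    have hT0 := (hTpos j hj).ne'
    have hM0' := hM0.ne'
    simp only [hu_def, hs_def]
    field_simp
  have huT : ∀ j ∈ T1, u j * T j = C j / (M:ℝ) := by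
    intro j hj
    have hT0 := (hTpos j hj).ne'
    simp only [hu_def]
    field_simp
  -- reformulated failure hypothesis
  have hfail : ∀ t : ℝ, 0 < t → t ≤ Dk →
      t < Ck' + (∑ j ∈ T1, (⌈t / T j⌉ : ℝ) * C j) / (M:ℝ) := by
    intro t ht htD
    have h0 := hcontra t ht htD
    have hdisj : Disjoint T1 T2 := by
      rw [Finset.disjoint_left]
      intro i hi1 hi2
      rw [hT1] at hi1
      rw [hT2] at hi2
      have h1 := (Finset.mem_filter.mp hi1).2
      have h2 := (Finset.mem_filter.mp hi2).2
      linarith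
    have hsplit : Finset.Icc 1 (k-1) = T1 ∪ T2 := by
      ext i
      simp only [hT1, hT2, Finset.mem_union, Finset.mem_filter]
      constructor
      · intro hi
        rcases lt_or_ge (T i) Dk with h | h
        · exact Or.inl ⟨hi, h⟩
        · exact Or.inr ⟨hi, h⟩
      · rintro (⟨hi, _⟩ | ⟨hi, _⟩) <;> exact hi
    rw [hsplit, Finset.sum_union hdisj] at h0
    have hT2sum : ∑ j ∈ T2, (⌈t / T j⌉ : ℝ) * C j = ∑ j ∈ T2, C j := by
      apply Finset.sum_congr rfl
      intro j hj
      have hTj : 0 < T j := hT j (hT2sub hj)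
      have hDT : Dk ≤ T j := by
        have hj' := hj
        rw [hT2] at hj'
        exact (Finset.mem_filter.mp hj').2
      have hle : ⌈t / T j⌉ ≤ 1 := by
        rw [Int.ceil_le]
        push_cast
        rw [div_le_one hTj]
        linarith
      have hge : 1 ≤ ⌈t / T j⌉ := Int.ceil_pos.mpr (div_pos ht hTj)
      have : ⌈t / T j⌉ = 1 := le_antisymm hle hge
      rw [this]
      norm_num
    rw [hT2sum, add_div] at h0
    rw [hCk']
    linarith
  -- constraints at the points s i
  have Hcon : ∀ i ∈ T1, s i < Ck' + (∑ j ∈ T1, u j * s j) +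
      ∑ j ∈ T1.filter (fun j => toLex (s j, j) < toLex (s i, i)), u j * s j := by
    intro i hiT
    have h0 := hfail (s i) (hspos i hiT) (hsD i hiT)
    have hbound : (∑ j ∈ T1, (⌈s i / T j⌉ : ℝ) * C j) / (M:ℝ) ≤
        (∑ j ∈ T1, u j * s j) +
          ∑ j ∈ T1.filter (fun j => toLex (s j, j) < toLex (s i, i)), u j * s j := by
      rw [Finset.sum_filter, ← Finset.sum_add_distrib, Finset.sum_div]
      apply Finset.sum_le_sum
      intro j hj
      have hTj := hTpos j hj
      have hCj := hCpos j (hT1sub hj)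
      by_cases hlt : toLex ((s j, j) : ℝ × ℕ) < toLex ((s i, i) : ℝ × ℕ)
      · rw [if_pos hlt]
        have hceil : (⌈s i / T j⌉ : ℤ) ≤ ⌊Dk / T j⌋ + 1 := by
          calc ⌈s i / T j⌉ ≤ ⌈Dk / T j⌉ :=
                Int.ceil_le_ceil ((div_le_div_iff_of_pos_right hTj).mpr (hsD i hiT))
          _ ≤ ⌊Dk / T j⌋ + 1 := Int.ceil_le_floor_add_one _
        have hcast : ((⌈s i / T j⌉ : ℤ) : ℝ) ≤ ((⌊Dk / T j⌋ : ℤ) : ℝ) + 1 := by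
          exact_mod_cast hceil
        have h1 : (⌈s i / T j⌉ : ℝ) * C j / (M:ℝ) ≤
            (((⌊Dk / T j⌋ : ℤ) : ℝ) + 1) * C j / (M:ℝ) := by gcongr
        have h2 : (((⌊Dk / T j⌋ : ℤ) : ℝ) + 1) * C j / (M:ℝ) = u j * s j + u j * T j := by
          rw [huT j hj, hus j hj]
          ring
        have h3 : u j * T j ≤ u j * s j :=
          mul_le_mul_of_nonneg_left (hsT j hj) (hupos j hj).le
        linarith
      · rw [if_neg hlt, add_zero]
        have hij : s i ≤ s j := by
          have hle := le_of_not_gt hlt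
          rcases Prod.Lex.le_iff.mp hle with h | h
          · exact h.le
          · exact le_of_eq h.1
        have hceil : (⌈s i / T j⌉ : ℤ) ≤ ⌊Dk / T j⌋ := by
          have hsj : s j / T j = ((⌊Dk / T j⌋ : ℤ) : ℝ) :=
            mul_div_cancel_right₀ _ (ne_of_gt hTj)
          calc ⌈s i / T j⌉ ≤ ⌈s j / T j⌉ :=
                Int.ceil_le_ceil ((div_le_div_iff_of_pos_right hTj).mpr hij)
          _ = ⌊Dk / T j⌋ := by rw [hsj, Int.ceil_intCast]
        have hcast : ((⌈s i / T j⌉ : ℤ) : ℝ) ≤ ((⌊Dk / T j⌋ : ℤ) : ℝ) := by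
          exact_mod_cast hceil
        calc (⌈s i / T j⌉ : ℝ) * C j / (M:ℝ) ≤ ((⌊Dk / T j⌋ : ℤ) : ℝ) * C j / (M:ℝ) := by
              gcongr
        _ = u j * s j := (hus j hj).symm
    linarith
  -- constraint at Dk
  have HD : Dk < Ck' + 2 * ∑ j ∈ T1, u j * s j := by
    have h0 := hfail Dk hDk le_rfl
    have hbound : (∑ j ∈ T1, (⌈Dk / T j⌉ : ℝ) * C j) / (M:ℝ) ≤
        2 * ∑ j ∈ T1, u j * s j := by
      rw [Finset.sum_div]
      have h2 : 2 * ∑ j ∈ T1, u j * s j = ∑ j ∈ T1, (u j * s j + u j * s j) := by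
        rw [Finset.sum_add_distrib]; ring
      rw [h2]
      apply Finset.sum_le_sum
      intro j hj
      have hTj := hTpos j hj
      have hCj := hCpos j (hT1sub hj)
      have hceil : (⌈Dk / T j⌉ : ℤ) ≤ ⌊Dk / T j⌋ + 1 := Int.ceil_le_floor_add_one _
      have hcast : ((⌈Dk / T j⌉ : ℤ) : ℝ) ≤ ((⌊Dk / T j⌋ : ℤ) : ℝ) + 1 := by
        exact_mod_cast hceil
      have h1 : (⌈Dk / T j⌉ : ℝ) * C j / (M:ℝ) ≤
          (((⌊Dk / T j⌋ : ℤ) : ℝ) + 1) * C j / (M:ℝ) := by gcongr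
      have h2' : (((⌊Dk / T j⌋ : ℤ) : ℝ) + 1) * C j / (M:ℝ) = u j * s j + u j * T j := by
        rw [huT j hj, hus j hj]; ring
      have h3 : u j * T j ≤ u j * s j :=
        mul_le_mul_of_nonneg_left (hsT j hj) (hupos j hj).le
      linarith
    linarith
  -- apply the core lemma
  have A := coreA u s T1 Ck' hCk'pos hupos hspos Hcon
  set σ := ∑ j ∈ T1, u j * s j with hσ
  set P := ∏ j ∈ T1, (1 + u j) with hP
  have hPeq : (∏ i ∈ T1, (1 + U i / (M:ℝ))) = P := by
    rw [hP]
    apply Finset.prod_congr rfl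
    intro j hj
    rw [hU]
    congr 1
    rw [hu_def]
    rw [div_div, mul_comm (T j) ((M:ℝ))]
  have hP1 : 1 ≤ P := by
    rw [hP]
    calc (1:ℝ) = ∏ _j ∈ T1, (1:ℝ) := by simp
    _ ≤ ∏ j ∈ T1, (1 + u j) := by
      apply Finset.prod_le_prod (fun j hj => by norm_num)
      intro j hj
      have := hupos j hj; linarith
  have hσ0 : 0 ≤ σ := by
    rw [hσ]
    exact Finset.sum_nonneg fun j hj => (mul_pos (hupos j hj) (hspos j hj)).le
  have hhyp' : P * (Dk + Ck') ≤ 2 * Dk := by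
    rw [hPeq] at hhyp
    have h1 : (0:ℝ) < 1 + Ck' / Dk := by positivity
    have h2 : P * (1 + Ck' / Dk) ≤ 2 := (le_div_iff₀ h1).mp hhyp
    have h3 := mul_le_mul_of_nonneg_right h2 hDk.le
    calc P * (Dk + Ck') = P * (1 + Ck' / Dk) * Dk := by
          field_simp
    _ ≤ 2 * Dk := h3
  have hP2 : P < 2 := by nlinarith
  have e1 : (Dk - Ck') * (2 - P) < (2 * σ) * (2 - P) := by
    apply mul_lt_mul_of_pos_right _ (by linarith)
    linarith
  nlinarith [A, e1, hhyp']
end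

section
/- Let M ≥ 1 and k ≥ 1 be integers. For i = 1, …, k−1 let C_i > 0, T_i > 0 and D_i > 0 with D_i ≤ T_i and D_i ≤ D_k, and let C_k > 0 and D_k > 0; put U_i = C_i/T_i and dbf(τ_i, t) = max{0, ⌊(t − D_i)/T_i⌋ + 1}·C_i. Suppose that for every real t with 0 < t ≤ D_k one has M·C_k + Σ_{i=1}^{k−1} ⌈t/T_i⌉·C_i > M·t. Then max{ C_k/D_k, (Σ_{i=1}^{k−1} U_i)/M, (Σ_{i=1}^{k−1} dbf(τ_i, D_k))/(M·D_k) } > w, where w is the unique positive real satisfying w·e^w = 1/2 (w = W(0.5) ≈ 0.3517337, so 1/w ≈ 2.84306). -/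
open MeasureTheory intervalIntegral

set_option maxHeartbeats 1000000



lemma stmt6_ind_intble {a b cut Cc : ℝ} (h0 : 0 < a) (hab : a ≤ b) :
    IntervalIntegrable (fun t => if cut < t then Cc / t^2 else 0) volume a b := by
  have hcont : ContinuousOn (fun t : ℝ => Cc / t^2) (Set.uIcc a b) := by
    apply ContinuousOn.div continuousOn_const (by fun_prop)
    intro x hx
    rw [Set.uIcc_of_le hab] at hx
    have hx0 : 0 < x := lt_of_lt_of_le h0 hx.1
    positivity
  have hI : IntegrableOn (fun t : ℝ => Cc / t^2) (Set.uIoc a b) volume :=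
    intervalIntegrable_iff.mp hcont.intervalIntegrable
  rw [intervalIntegrable_iff]
  have heq : (fun t => if cut < t then Cc / t^2 else 0)
      = Set.indicator (Set.Ioi cut) (fun t : ℝ => Cc / t^2) := by
    funext t
    simp [Set.indicator, Set.mem_Ioi]
  rw [heq]
  exact hI.indicator measurableSet_Ioi

lemma stmt6_ind_integral {a b cut Cc : ℝ} (h0 : 0 < a) (hac : a ≤ cut) (hcb : cut ≤ b) :
    ∫ t in a..b, (if cut < t then Cc / t^2 else 0) = Cc / cut - Cc / b := by
  have h0c : 0 < cut := lt_of_lt_of_le h0 hac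
  have h0b : 0 < b := lt_of_lt_of_le h0c hcb
  have h1 : IntervalIntegrable (fun t => if cut < t then Cc / t^2 else 0) volume a cut :=
    stmt6_ind_intble h0 hac
  have h2 : IntervalIntegrable (fun t => if cut < t then Cc / t^2 else 0) volume cut b :=
    stmt6_ind_intble h0c hcb
  rw [← integral_add_adjacent_intervals h1 h2]
  have e1 : ∫ t in a..cut, (if cut < t then Cc / t^2 else 0) = 0 := by
    rw [integral_congr (g := fun _ => (0:ℝ))]
    · simp
    · intro t ht
      rw [Set.uIcc_of_le hac] at ht
      simp only
      rw [if_neg (not_lt.mpr ht.2)]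
  have e2 : ∫ t in cut..b, (if cut < t then Cc / t^2 else 0) = Cc / cut - Cc / b := by
    have hcg : ∫ t in cut..b, (if cut < t then Cc / t^2 else 0)
        = ∫ t in cut..b, Cc * t ^ (-2 : ℤ) := by
      apply intervalIntegral.integral_congr_ae
      filter_upwards with t ht
      rw [Set.uIoc_of_le hcb] at ht
      rw [if_pos ht.1]
      rw [zpow_neg, zpow_two, div_eq_mul_inv, sq]
    rw [hcg, intervalIntegral.integral_const_mul,
      integral_zpow (Or.inr ⟨by norm_num, by
        rw [Set.uIcc_of_le hcb]
        intro hmem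
        exact absurd hmem.1 (not_le.mpr h0c)⟩)]
    have : (-2 : ℤ) + 1 = -1 := by norm_num
    rw [this]
    push_cast
    rw [zpow_neg, zpow_one, zpow_neg, zpow_one]
    field_simp
    ring
  rw [e1, e2, zero_add]







lemma stmt6_step_repr (Cc Tt d t : ℝ) (hT : 0 < Tt) (hd : 0 < d) (ht : d/2 ≤ t)
    (htd : t ≤ d) :
    ∑ j ∈ Finset.Ico ⌈d/2/Tt⌉ ⌈d/Tt⌉, (if (j:ℝ)*Tt < t then Cc/t^2 else 0)
      = ((⌈t/Tt⌉:ℝ) - (⌈d/2/Tt⌉:ℝ)) * (Cc/t^2) := by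
  have ht0 : 0 < t := lt_of_lt_of_le (by positivity) ht
  have hq : ⌈d/2/Tt⌉ ≤ ⌈t/Tt⌉ := Int.ceil_mono (by gcongr)
  have hm : ⌈t/Tt⌉ ≤ ⌈d/Tt⌉ := Int.ceil_mono (by gcongr)
  have hcond : ∀ j : ℤ, ((j:ℝ)*Tt < t) ↔ (j < ⌈t/Tt⌉) := by
    intro j
    rw [Int.lt_ceil, ← lt_div_iff₀ hT]
  calc ∑ j ∈ Finset.Ico ⌈d/2/Tt⌉ ⌈d/Tt⌉, (if (j:ℝ)*Tt < t then Cc/t^2 else 0)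
      = ∑ j ∈ Finset.Ico ⌈d/2/Tt⌉ ⌈d/Tt⌉, (if j < ⌈t/Tt⌉ then Cc/t^2 else 0) := by
        refine Finset.sum_congr rfl fun j _ => ?_
        rw [if_congr (hcond j) rfl rfl]
    _ = ∑ j ∈ (Finset.Ico ⌈d/2/Tt⌉ ⌈d/Tt⌉).filter (fun j => j < ⌈t/Tt⌉), Cc/t^2 :=
        (Finset.sum_filter _ _).symm
    _ = ((⌈t/Tt⌉ - ⌈d/2/Tt⌉).toNat : ℝ) * (Cc/t^2) := by
        rw [Finset.Ico_filter_lt, min_eq_right hm, Finset.sum_const, Int.card_Ico,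
          nsmul_eq_mul]
    _ = ((⌈t/Tt⌉:ℝ) - (⌈d/2/Tt⌉:ℝ)) * (Cc/t^2) := by
        congr 1
        exact_mod_cast Int.toNat_of_nonneg (by omega : (0:ℤ) ≤ ⌈t/Tt⌉ - ⌈d/2/Tt⌉)

lemma stmt6_per_task (Cc Tt d : ℝ) (hC : 0 < Cc) (hT : 0 < Tt) (hd : 0 < d) :
    (∫ t in (d/2)..d,
        ∑ j ∈ Finset.Ico ⌈d/2/Tt⌉ ⌈d/Tt⌉, (if (j:ℝ)*Tt < t then Cc/t^2 else 0))
      + ((⌈d/Tt⌉:ℝ) - (⌈d/2/Tt⌉:ℝ)) * Cc / d ≤ Cc / Tt := by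
  set q := ⌈d/2/Tt⌉ with hqdef
  set m := ⌈d/Tt⌉ with hmdef
  have hd2 : (0:ℝ) < d/2 := by positivity
  have hd2d : d/2 ≤ d := by linarith
  have hq1 : 1 ≤ q := by
    rw [hqdef]
    exact Int.ceil_pos.mpr (by positivity)
  have hqm : q ≤ m := Int.ceil_mono (by gcongr <;> linarith)
  have hqr : d/2/Tt ≤ (q:ℝ) := Int.le_ceil _
  have hm2q : m ≤ 2*q := by
    rw [hmdef]
    apply Int.ceil_le.mpr
    push_cast
    have : d/Tt = 2*(d/2/Tt) := by ring
    rw [this]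
    linarith
  have hjlow : ∀ j ∈ Finset.Ico q m, d/2 ≤ (j:ℝ)*Tt := by
    intro j hj
    have h1 : q ≤ j := (Finset.mem_Ico.mp hj).1
    have h1' : (q:ℝ) ≤ (j:ℝ) := by exact_mod_cast h1
    have h2 : d/2 ≤ (q:ℝ)*Tt := by
      rw [div_le_iff₀ hT] at hqr
      linarith [hqr]
    nlinarith
  have hjhigh : ∀ j ∈ Finset.Ico q m, (j:ℝ)*Tt ≤ d := by
    intro j hj
    have h1 : j ≤ m - 1 := by
      have := (Finset.mem_Ico.mp hj).2
      omega
    have h1' : (j:ℝ) ≤ (m:ℝ) - 1 := by exact_mod_cast h1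
    have h2 : (m:ℝ) - 1 < d/Tt := by
      have := Int.ceil_lt_add_one (d/Tt)
      rw [← hmdef] at this
      linarith
    have : (j:ℝ) < d/Tt := lt_of_le_of_lt h1' h2
    rw [lt_div_iff₀ hT] at this
    linarith
  rw [integral_finset_sum (fun j hj => stmt6_ind_intble hd2 hd2d)]
  rw [Finset.sum_congr rfl (fun j hj =>
    stmt6_ind_integral hd2 (hjlow j hj) ((hjhigh j hj).trans_eq rfl))]
  have hcard : ((Finset.Ico q m).card : ℝ) = (m:ℝ) - (q:ℝ) := by
    rw [Int.card_Ico]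
    exact_mod_cast Int.toNat_of_nonneg (by omega : (0:ℤ) ≤ m - q)
  have hqpos : (0:ℝ) < (q:ℝ) := by exact_mod_cast hq1
  have hqT : (0:ℝ) < (q:ℝ)*Tt := by positivity
  have hsum : ∑ j ∈ Finset.Ico q m, Cc/((j:ℝ)*Tt) ≤ ((m:ℝ) - (q:ℝ)) * (Cc/((q:ℝ)*Tt)) := by
    calc ∑ j ∈ Finset.Ico q m, Cc/((j:ℝ)*Tt)
        ≤ ∑ j ∈ Finset.Ico q m, Cc/((q:ℝ)*Tt) := by
          apply Finset.sum_le_sum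
          intro j hj
          have h1 : (q:ℝ) ≤ (j:ℝ) := by exact_mod_cast (Finset.mem_Ico.mp hj).1
          gcongr
      _ = ((Finset.Ico q m).card : ℝ) * (Cc/((q:ℝ)*Tt)) := by
          rw [Finset.sum_const, nsmul_eq_mul]
      _ = ((m:ℝ) - (q:ℝ)) * (Cc/((q:ℝ)*Tt)) := by rw [hcard]
  have hfinal : ((m:ℝ) - (q:ℝ)) * (Cc/((q:ℝ)*Tt)) ≤ Cc/Tt := by
    have h2q : (m:ℝ) - (q:ℝ) ≤ (q:ℝ) := by
      have : (m:ℝ) ≤ 2*(q:ℝ) := by exact_mod_cast hm2q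
      linarith
    calc ((m:ℝ) - (q:ℝ)) * (Cc/((q:ℝ)*Tt)) ≤ (q:ℝ) * (Cc/((q:ℝ)*Tt)) := by
          apply mul_le_mul_of_nonneg_right h2q (by positivity)
      _ = Cc/Tt := by field_simp
  have hsplit : ∑ j ∈ Finset.Ico q m, (Cc/((j:ℝ)*Tt) - Cc/d)
      = (∑ j ∈ Finset.Ico q m, Cc/((j:ℝ)*Tt)) - ((m:ℝ) - (q:ℝ)) * (Cc/d) := by
    rw [Finset.sum_sub_distrib, Finset.sum_const, nsmul_eq_mul, hcard]
  rw [hsplit]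
  have : ((m:ℝ) - (q:ℝ)) * Cc / d = ((m:ℝ) - (q:ℝ)) * (Cc/d) := by ring
  rw [this]
  linarith









/-- Arithmetic core of Theorem 5 of the paper: deadline-monotonic partitioning
with exact time-demand analysis has speedup factor `1/W(0.5) ≈ 2.84306` for
constrained-deadline sporadic task systems. Here `w = W(0.5)` is the unique
positive real with `w * exp w = 1/2`. -/
theorem stmt_6
    (M k : ℕ) (hM : 1 ≤ M) (hk : 1 ≤ k)
    (C T D : ℕ → ℝ)
    (hC : ∀ i ∈ Finset.Icc 1 (k - 1), 0 < C i)
    (hT : ∀ i ∈ Finset.Icc 1 (k - 1), 0 < T i)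
    (hD : ∀ i ∈ Finset.Icc 1 (k - 1), 0 < D i)
    (hconstr : ∀ i ∈ Finset.Icc 1 (k - 1), D i ≤ T i)
    (hDle : ∀ i ∈ Finset.Icc 1 (k - 1), D i ≤ D k)
    (hCk : 0 < C k) (hDk : 0 < D k)
    (U : ℕ → ℝ) (hU : ∀ i, U i = C i / T i)
    (dbf : ℕ → ℝ → ℝ)
    (hdbf : ∀ i t, dbf i t = max 0 ((⌊(t - D i) / T i⌋ : ℝ) + 1) * C i)
    (hfail : ∀ t : ℝ, 0 < t → t ≤ D k →
      M * C k + (∑ i ∈ Finset.Icc 1 (k - 1), (⌈t / T i⌉ : ℝ) * C i) > M * t)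
    (w : ℝ) (hw : 0 < w) (hwEq : w * Real.exp w = 1 / 2) :
    max (C k / D k)
      (max ((∑ i ∈ Finset.Icc 1 (k - 1), U i) / M)
        ((∑ i ∈ Finset.Icc 1 (k - 1), dbf i (D k)) / (M * D k))) > w := by
  by_contra hcon
  push_neg at hcon
  rw [max_le_iff, max_le_iff] at hcon
  obtain ⟨h1, h2, h3⟩ := hcon
  set I := Finset.Icc 1 (k - 1) with hIdef
  set d := D k with hddef
  have hM1 : (1:ℝ) ≤ (M:ℝ) := by exact_mod_cast hM
  have hM0 : (0:ℝ) < (M:ℝ) := lt_of_lt_of_le one_pos hM1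
  -- basic facts about w
  have hexpw : Real.exp w = 1/(2*w) := by
    field_simp
    linarith [hwEq]
  have hw2 : w < 1/2 := by
    nlinarith [Real.add_one_le_exp w, Real.exp_pos w]
  have hw3 : 1/3 ≤ w := by
    have h := Real.add_one_le_exp (-w)
    rw [Real.exp_neg, hexpw] at h
    have h2w : (0:ℝ) < 2*w := by linarith
    rw [one_div, inv_inv] at h
    nlinarith
  have hlogw : Real.log (1/(2*w)) = w := by
    rw [← hexpw, Real.log_exp]
  -- translate the contradiction hypotheses
  have hCk' : C k ≤ w * d := by rwa [div_le_iff₀ hDk] at h1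
  have hU' : ∑ i ∈ I, C i / T i ≤ w * M := by
    have := (div_le_iff₀ hM0).mp h2
    calc ∑ i ∈ I, C i / T i = ∑ i ∈ I, U i := by
          exact Finset.sum_congr rfl fun i _ => (hU i).symm
      _ ≤ w * M := this
  have hdbf' : ∑ i ∈ I, dbf i d ≤ w * ((M:ℝ)*d) := by
    have hMd : (0:ℝ) < (M:ℝ)*d := by positivity
    have := (div_le_iff₀ hMd).mp h3
    linarith
  -- geometry
  have hd2 : (0:ℝ) < d/2 := by positivity
  have hd2d : d/2 ≤ d := by linarith
  have ha1 : d/2 ≤ 2*w*d := by nlinarith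
  have ha2 : 2*w*d ≤ d := by nlinarith
  have ha0 : 0 < 2*w*d := by positivity
  -- Step B : ∑ ⌈(d/2)/T i⌉ * C i ≤ w M d
  have hqC : ∑ i ∈ I, ((⌈d/2/T i⌉:ℝ)) * C i ≤ w * ((M:ℝ)*d) := by
    refine le_trans (Finset.sum_le_sum fun i hi => ?_) hdbf'
    have hTi := hT i hi
    have hCi := hC i hi
    have hDi := hD i hi
    have hDiT := hconstr i hi
    have hDid := hDle i hi
    rw [hdbf i d]
    have hfl0 : (0:ℤ) ≤ ⌊(d - D i)/T i⌋ := by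
      apply Int.floor_nonneg.mpr
      apply div_nonneg (by linarith) hTi.le
    have hflR : (0:ℝ) ≤ (⌊(d - D i)/T i⌋:ℝ) := by exact_mod_cast hfl0
    rw [max_eq_right (by linarith)]
    apply mul_le_mul_of_nonneg_right _ hCi.le
    have key : ⌈d/2/T i⌉ ≤ ⌊(d - D i)/T i⌋ + 1 := by
      rcases le_or_gt (D i) (d/2) with hcase | hcase
      · calc ⌈d/2/T i⌉ ≤ ⌈(d - D i)/T i⌉ := Int.ceil_mono (by gcongr <;> linarith)
          _ ≤ ⌊(d - D i)/T i⌋ + 1 := Int.ceil_le_floor_add_one _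
      · have hT2 : d/2 < T i := by linarith
        have : d/2/T i ≤ 1 := by
          rw [div_le_one hTi]
          linarith
        have h1' : ⌈d/2/T i⌉ ≤ 1 := Int.ceil_le.mpr (by exact_mod_cast this)
        omega
    calc ((⌈d/2/T i⌉:ℝ)) ≤ ((⌊(d - D i)/T i⌋ + 1 : ℤ):ℝ) := by exact_mod_cast key
      _ = (⌊(d - D i)/T i⌋:ℝ) + 1 := by push_cast; ring
  -- strict numerator bound from failure
  have hnum : ∀ t : ℝ, 0 < t → t ≤ d →
      (M:ℝ)*(t - 2*w*d) < ∑ i ∈ I, ((⌈t/T i⌉:ℝ) - (⌈d/2/T i⌉:ℝ)) * C i := by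
    intro t ht0 htd
    have hf := hfail t ht0 htd
    have hsplit : ∑ i ∈ I, ((⌈t/T i⌉:ℝ) - (⌈d/2/T i⌉:ℝ)) * C i
        = (∑ i ∈ I, (⌈t/T i⌉:ℝ)*C i) - ∑ i ∈ I, (⌈d/2/T i⌉:ℝ)*C i := by
      rw [← Finset.sum_sub_distrib]
      exact Finset.sum_congr rfl fun i _ => by ring
    rw [hsplit]
    have hMC : (M:ℝ)*(C k) ≤ (M:ℝ)*(w*d) := mul_le_mul_of_nonneg_left hCk' hM0.le
    have hMw : (M:ℝ)*(w*d) = w*((M:ℝ)*d) := by ring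
    nlinarith [hf, hqC]
  -- the step functions
  have hHint : ∀ i ∈ I, IntervalIntegrable
      (fun t => ∑ j ∈ Finset.Ico ⌈d/2/T i⌉ ⌈d/T i⌉, (if (j:ℝ)*T i < t then C i/t^2 else 0))
      volume (d/2) d := by
    intro i hi
    have : (fun t => ∑ j ∈ Finset.Ico ⌈d/2/T i⌉ ⌈d/T i⌉, (if (j:ℝ)*T i < t then C i/t^2 else 0))
        = ∑ j ∈ Finset.Ico ⌈d/2/T i⌉ ⌈d/T i⌉, (fun t => if (j:ℝ)*T i < t then C i/t^2 else 0) := by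
      funext t
      simp
    rw [this]
    exact IntervalIntegrable.sum _ (fun j _ => stmt6_ind_intble hd2 hd2d)
  have hHsumint : IntervalIntegrable
      (fun t => ∑ i ∈ I, ∑ j ∈ Finset.Ico ⌈d/2/T i⌉ ⌈d/T i⌉, (if (j:ℝ)*T i < t then C i/t^2 else 0))
      volume (d/2) d := by
    have : (fun t => ∑ i ∈ I, ∑ j ∈ Finset.Ico ⌈d/2/T i⌉ ⌈d/T i⌉, (if (j:ℝ)*T i < t then C i/t^2 else 0))
        = ∑ i ∈ I, (fun t => ∑ j ∈ Finset.Ico ⌈d/2/T i⌉ ⌈d/T i⌉, (if (j:ℝ)*T i < t then C i/t^2 else 0)) := by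
      funext t
      simp
    rw [this]
    exact IntervalIntegrable.sum _ hHint
  -- main sum bound
  have hmain : (∫ t in (d/2)..d,
        ∑ i ∈ I, ∑ j ∈ Finset.Ico ⌈d/2/T i⌉ ⌈d/T i⌉, (if (j:ℝ)*T i < t then C i/t^2 else 0))
      + (∑ i ∈ I, ((⌈d/T i⌉:ℝ) - (⌈d/2/T i⌉:ℝ)) * C i)/d ≤ w * M := by
    rw [integral_finset_sum hHint, Finset.sum_div, ← Finset.sum_add_distrib]
    refine le_trans (Finset.sum_le_sum fun i hi => ?_) hU'
    exact stmt6_per_task (C i) (T i) d (hC i hi) (hT i hi) hDk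
  -- φ and the lower bound of the integral
  have hφint : IntervalIntegrable (fun t => (M:ℝ) * max 0 (t - 2*w*d) / t^2) volume (d/2) d := by
    apply ContinuousOn.intervalIntegrable
    apply ContinuousOn.div
    · exact (continuous_const.mul (continuous_const.max (continuous_id.sub continuous_const))).continuousOn
    · fun_prop
    · intro x hx
      rw [Set.uIcc_of_le hd2d] at hx
      have : 0 < x := lt_of_lt_of_le hd2 hx.1
      positivity
  have hmono : (∫ t in (d/2)..d, (M:ℝ) * max 0 (t - 2*w*d) / t^2)
      ≤ ∫ t in (d/2)..d,
        ∑ i ∈ I, ∑ j ∈ Finset.Ico ⌈d/2/T i⌉ ⌈d/T i⌉, (if (j:ℝ)*T i < t then C i/t^2 else 0) := by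
    apply integral_mono_on hd2d hφint hHsumint
    intro t ht
    have ht0 : 0 < t := lt_of_lt_of_le hd2 ht.1
    have ht2 : (0:ℝ) < t^2 := by positivity
    have hrepr : ∑ i ∈ I, ∑ j ∈ Finset.Ico ⌈d/2/T i⌉ ⌈d/T i⌉, (if (j:ℝ)*T i < t then C i/t^2 else 0)
        = (∑ i ∈ I, ((⌈t/T i⌉:ℝ) - (⌈d/2/T i⌉:ℝ)) * C i)/t^2 := by
      rw [Finset.sum_div]
      refine Finset.sum_congr rfl fun i hi => ?_
      rw [stmt6_step_repr (C i) (T i) d t (hT i hi) hDk ht.1 ht.2]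
      ring
    rw [hrepr]
    gcongr
    rcases le_or_gt t (2*w*d) with hcase | hcase
    · rw [max_eq_left (by linarith)]
      rw [mul_zero]
      apply Finset.sum_nonneg
      intro i hi
      apply mul_nonneg _ (hC i hi).le
      have : ⌈d/2/T i⌉ ≤ ⌈t/T i⌉ := Int.ceil_mono (by gcongr; exacts [(hT i hi).le, ht.1])
      have : ((⌈d/2/T i⌉:ℤ):ℝ) ≤ ((⌈t/T i⌉:ℤ):ℝ) := by exact_mod_cast this
      linarith
    · rw [max_eq_right (by linarith)]
      exact (hnum t ht0 ht.2).le
  -- split and compute the φ integral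
  have hsub1 : Set.uIcc (d/2) (2*w*d) ⊆ Set.uIcc (d/2) d := by
    apply Set.uIcc_subset_uIcc Set.left_mem_uIcc
    rw [Set.uIcc_of_le hd2d]
    exact ⟨ha1, ha2⟩
  have hsub2 : Set.uIcc (2*w*d) d ⊆ Set.uIcc (d/2) d := by
    apply Set.uIcc_subset_uIcc _ Set.right_mem_uIcc
    rw [Set.uIcc_of_le hd2d]
    exact ⟨ha1, ha2⟩
  have hsplitφ : (∫ t in (d/2)..d, (M:ℝ) * max 0 (t - 2*w*d) / t^2)
      = (∫ t in (d/2)..(2*w*d), (M:ℝ) * max 0 (t - 2*w*d) / t^2)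
        + ∫ t in (2*w*d)..d, (M:ℝ) * max 0 (t - 2*w*d) / t^2 := by
    rw [integral_add_adjacent_intervals (hφint.mono_set hsub1) (hφint.mono_set hsub2)]
  have hpiece1 : (∫ t in (d/2)..(2*w*d), (M:ℝ) * max 0 (t - 2*w*d) / t^2) = 0 := by
    rw [integral_congr (g := fun _ => (0:ℝ))]
    · simp
    · intro t htmem
      rw [Set.uIcc_of_le ha1] at htmem
      simp only
      rw [max_eq_left (by linarith [htmem.2]), mul_zero, zero_div]
  have hcont1 : IntervalIntegrable (fun t => (M:ℝ)*(1/t)) volume (2*w*d) d := by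
    apply ContinuousOn.intervalIntegrable
    apply ContinuousOn.mul continuousOn_const
    apply ContinuousOn.div continuousOn_const continuousOn_id
    intro x hx
    rw [Set.uIcc_of_le ha2] at hx
    have : 0 < x := lt_of_lt_of_le ha0 hx.1
    positivity
  have hcont2 : IntervalIntegrable (fun t : ℝ => ((M:ℝ)*(2*w*d))*t^(-2:ℤ)) volume (2*w*d) d := by
    apply ContinuousOn.intervalIntegrable
    apply ContinuousOn.mul continuousOn_const
    intro x hx
    rw [Set.uIcc_of_le ha2] at hx
    have hx0 : x ≠ 0 := by
      have : 0 < x := lt_of_lt_of_le ha0 hx.1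
      positivity
    exact (continuousAt_zpow₀ x (-2:ℤ) (Or.inl hx0)).continuousWithinAt
  have hnotmem : (0:ℝ) ∉ Set.uIcc (2*w*d) d := by
    rw [Set.uIcc_of_le ha2]
    intro hmem
    exact absurd hmem.1 (not_le.mpr ha0)
  have hpiece2 : (∫ t in (2*w*d)..d, (M:ℝ) * max 0 (t - 2*w*d) / t^2)
      = (M:ℝ) * (w - 1 + 2*w) := by
    rw [integral_congr (g := fun t => (M:ℝ)*(1/t) - ((M:ℝ)*(2*w*d))*t^(-2:ℤ))
      (by
        intro t htmem
        rw [Set.uIcc_of_le ha2] at htmem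
        have ht0 : 0 < t := lt_of_lt_of_le ha0 htmem.1
        simp only
        rw [max_eq_right (by linarith [htmem.1]), zpow_neg, zpow_two]
        field_simp)]
    rw [intervalIntegral.integral_sub hcont1 hcont2,
      intervalIntegral.integral_const_mul, intervalIntegral.integral_const_mul,
      integral_one_div hnotmem, integral_zpow (Or.inr ⟨by norm_num, hnotmem⟩)]
    have hda : d/(2*w*d) = 1/(2*w) := by
      rw [div_eq_div_iff (by positivity) (by positivity)]
      ring
    rw [hda, hlogw]
    have hd0 : d ≠ 0 := ne_of_gt hDk
    have hw0 : w ≠ 0 := ne_of_gt hw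
    have : (-2:ℤ) + 1 = -1 := by norm_num
    rw [this]
    push_cast
    rw [zpow_neg, zpow_one, zpow_neg, zpow_one]
    field_simp
    ring
  -- boundary term
  have hbd : (M:ℝ)*(d - 2*w*d) < ∑ i ∈ I, ((⌈d/T i⌉:ℝ) - (⌈d/2/T i⌉:ℝ)) * C i :=
    hnum d hDk le_rfl
  have hbd' : (M:ℝ)*(1 - 2*w) < (∑ i ∈ I, ((⌈d/T i⌉:ℝ) - (⌈d/2/T i⌉:ℝ)) * C i)/d := by
    rw [lt_div_iff₀ hDk]
    nlinarith
  -- final contradiction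
  have hφval : (∫ t in (d/2)..d, (M:ℝ) * max 0 (t - 2*w*d) / t^2) = (M:ℝ)*(3*w - 1) := by
    rw [hsplitφ, hpiece1, hpiece2]
    ring
  rw [hφval] at hmono
  nlinarith [hmain, hmono, hbd']
end

section
/- Let M ≥ 1 and k ≥ 1 be integers. Let C_1, …, C_k ≥ 0, T_1, …, T_{k−1} > 0 and D_k > 0 be reals, and put U_i = C_i/T_i. Suppose {1, …, k−1} is partitioned into pairwise disjoint sets S_1, …, S_M, and for each m let S_m^1 = { i ∈ S_m : T_i < D_k } and S_m^2 = { i ∈ S_m : T_i ≥ D_k }; let T*1 = ∪_m S_m^1, T*2 = ∪_m S_m^2 and C_k' = C_k + (Σ_{i∈T*2} C_i)/M. If for every m ∈ {1, …, M} one has ((C_k + Σ_{i∈S_m^2} C_i)/D_k + 1)·∏_{i∈S_m^1} (U_i + 1) > 2, then (C_k'/D_k + 1)·∏_{i∈T*1} (U_i/M + 1) > 2. -/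
lemma amgm_prod_le (n : ℕ) (hn : n ≠ 0) (s : Finset ℕ) (hcard : s.card = n)
    (f : ℕ → ℝ) (hf : ∀ i ∈ s, 0 ≤ f i) :
    ∏ i ∈ s, f i ≤ ((∑ i ∈ s, f i) / n) ^ n := by
  have hn' : (0:ℝ) < n := by positivity
  have h := Real.geom_mean_le_arith_mean_weighted s (fun _ => (n:ℝ)⁻¹) f
    (fun i _ => by positivity)
    (by simp [Finset.sum_const, hcard]; field_simp) hf
  have hprod : ∏ i ∈ s, f i ^ ((n:ℝ)⁻¹) = (∏ i ∈ s, f i) ^ ((n:ℝ)⁻¹) :=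
    Real.finset_prod_rpow s f hf _
  rw [hprod] at h
  have hsum : ∑ i ∈ s, (n:ℝ)⁻¹ * f i = (∑ i ∈ s, f i) / n := by
    rw [← Finset.mul_sum]; ring
  rw [hsum] at h
  have hnn : (0:ℝ) ≤ ∏ i ∈ s, f i := Finset.prod_nonneg hf
  have := pow_le_pow_left₀ (Real.rpow_nonneg hnn _) h n
  rwa [Real.rpow_inv_natCast_pow hnn hn] at this

/-- The contrapositive form proved in Theorem 6 of the paper: if task `τ_k`
fails the hyperbolic schedulability bound on every one of the `M` processors,
then the combined hyperbolic condition is also violated. -/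
theorem stmt_7
    (M k : ℕ) (hM : 1 ≤ M) (hk : 1 ≤ k)
    (C T : ℕ → ℝ) (Dk : ℝ)
    (hC : ∀ i ∈ Finset.Icc 1 k, 0 ≤ C i)
    (hT : ∀ i ∈ Finset.Icc 1 (k - 1), 0 < T i)
    (hDk : 0 < Dk)
    (U : ℕ → ℝ) (hU : ∀ i, U i = C i / T i)
    (S : ℕ → Finset ℕ)
    (hSdisj : ∀ m ∈ Finset.Icc 1 M, ∀ m' ∈ Finset.Icc 1 M, m ≠ m' → Disjoint (S m) (S m'))
    (hSunion : (Finset.Icc 1 M).biUnion S = Finset.Icc 1 (k - 1))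
    (S1 S2 : ℕ → Finset ℕ)
    (hS1 : ∀ m, S1 m = (S m).filter (fun i => T i < Dk))
    (hS2 : ∀ m, S2 m = (S m).filter (fun i => Dk ≤ T i))
    (T1 T2 : Finset ℕ)
    (hT1 : T1 = (Finset.Icc 1 M).biUnion S1)
    (hT2 : T2 = (Finset.Icc 1 M).biUnion S2)
    (Ck' : ℝ) (hCk' : Ck' = C k + (∑ i ∈ T2, C i) / M)
    (hfail : ∀ m ∈ Finset.Icc 1 M,
      ((C k + ∑ i ∈ S2 m, C i) / Dk + 1) * ∏ i ∈ S1 m, (U i + 1) > 2) :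
    (Ck' / Dk + 1) * ∏ i ∈ T1, (U i / M + 1) > 2 := by
  set P := Finset.Icc 1 M with hP
  have hM0 : (M:ℕ) ≠ 0 := by omega
  have hMpos : (0:ℝ) < M := by positivity
  have hPcard : P.card = M := by simp [hP]
  -- membership facts
  have hsub : ∀ m ∈ P, S m ⊆ Finset.Icc 1 (k - 1) := fun m hm => by
    rw [← hSunion]; exact Finset.subset_biUnion_of_mem S hm
  have hsubk : Finset.Icc 1 (k-1) ⊆ Finset.Icc 1 k :=
    Finset.Icc_subset_Icc_right (by omega)
  have hCnn : ∀ i ∈ Finset.Icc 1 (k-1), 0 ≤ C i := fun i hi => hC i (hsubk hi)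
  have hUnn : ∀ i ∈ Finset.Icc 1 (k-1), 0 ≤ U i := fun i hi => by
    rw [hU]; exact div_nonneg (hCnn i hi) (hT i hi).le
  have hCknn : 0 ≤ C k := hC k (by simp [hk])
  -- disjointness of the filtered families
  have hS1disj : (↑P : Set ℕ).PairwiseDisjoint S1 := fun m hm m' hm' hne => by
    simp only [Function.onFun, hS1]
    exact Finset.disjoint_filter_filter (hSdisj m hm m' hm' hne)
  have hS2disj : (↑P : Set ℕ).PairwiseDisjoint S2 := fun m hm m' hm' hne => by
    simp only [Function.onFun, hS2]
    exact Finset.disjoint_filter_filter (hSdisj m hm m' hm' hne)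
  have hS1sub : ∀ m ∈ P, S1 m ⊆ Finset.Icc 1 (k-1) := fun m hm => by
    rw [hS1]; exact (Finset.filter_subset _ _).trans (hsub m hm)
  have hS2sub : ∀ m ∈ P, S2 m ⊆ Finset.Icc 1 (k-1) := fun m hm => by
    rw [hS2]; exact (Finset.filter_subset _ _).trans (hsub m hm)
  have hT1sub : T1 ⊆ Finset.Icc 1 (k-1) := by
    rw [hT1]; exact Finset.biUnion_subset.mpr hS1sub
  -- abbreviations
  set A : ℝ := Ck' / Dk + 1 with hA
  set B : ℝ := ∏ i ∈ T1, (U i / M + 1) with hB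
  set f : ℕ → ℝ := fun m => (C k + ∑ i ∈ S2 m, C i) / Dk + 1 with hf
  set g : ℕ → ℝ := fun m => ∏ i ∈ S1 m, (U i + 1) with hg
  have hfnn : ∀ m ∈ P, 0 ≤ f m := fun m hm => by
    have : 0 ≤ ∑ i ∈ S2 m, C i :=
      Finset.sum_nonneg fun i hi => hCnn i (hS2sub m hm hi)
    have := div_nonneg (add_nonneg hCknn this) hDk.le
    simp only [hf]; linarith
  have hgnn : ∀ m ∈ P, 0 ≤ g m := fun m hm =>
    Finset.prod_nonneg fun i hi => by
      have := hUnn i (hS1sub m hm hi); linarith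
  -- Step C : ∏ f ≤ A ^ M
  have hsumf : (∑ m ∈ P, f m) / M = A := by
    have hsum2 : ∑ m ∈ P, ∑ i ∈ S2 m, C i = ∑ i ∈ T2, C i := by
      rw [hT2, Finset.sum_biUnion hS2disj]
    simp only [hf, hA, hCk']
    rw [Finset.sum_add_distrib, Finset.sum_const, hPcard, ← Finset.sum_div,
      Finset.sum_add_distrib, Finset.sum_const, hPcard, hsum2]
    field_simp
    ring
  have hprodf : ∏ m ∈ P, f m ≤ A ^ M := by
    have := amgm_prod_le M hM0 P hPcard f hfnn
    rwa [hsumf] at this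
  -- Step D : ∏ g = ∏_{T1} (U i + 1) ≤ B ^ M
  have hprodg_eq : ∏ m ∈ P, g m = ∏ i ∈ T1, (U i + 1) := by
    rw [hT1, Finset.prod_biUnion hS1disj]
  have hprodg : ∏ m ∈ P, g m ≤ B ^ M := by
    rw [hprodg_eq, hB, ← Finset.prod_pow]
    refine Finset.prod_le_prod (fun i hi => by
      have := hUnn i (hT1sub hi); linarith) (fun i hi => ?_)
    have hUi := hUnn i (hT1sub hi)
    have hb : (-2:ℝ) ≤ U i / M := le_trans (by norm_num) (by positivity : (0:ℝ) ≤ U i / M)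
    have := one_add_mul_le_pow hb M
    have hMU : (M:ℝ) * (U i / M) = U i := by field_simp
    rw [hMU] at this
    calc U i + 1 = 1 + U i := by ring
    _ ≤ (1 + U i / M) ^ M := this
    _ = (U i / M + 1) ^ M := by ring_nf
  -- Step E : 2^M < ∏ (f * g)
  have hE : (2:ℝ) ^ M < ∏ m ∈ P, (f m * g m) := by
    have hne : P.Nonempty := ⟨1, by simp [hP, hM]⟩
    calc (2:ℝ) ^ M = ∏ _m ∈ P, (2:ℝ) := by rw [Finset.prod_const, hPcard]
    _ < ∏ m ∈ P, (f m * g m) :=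
      Finset.prod_lt_prod_of_nonempty (fun m hm => by norm_num)
        (fun m hm => hfail m hm) hne
  have hsplit : ∏ m ∈ P, (f m * g m) = (∏ m ∈ P, f m) * (∏ m ∈ P, g m) :=
    Finset.prod_mul_distrib
  have hBnn : 0 ≤ B := Finset.prod_nonneg fun i hi => by
    have := hUnn i (hT1sub hi); positivity
  have hAnn : 0 ≤ A := by
    have h2 : 0 ≤ ∑ i ∈ T2, C i := Finset.sum_nonneg fun i hi => by
      apply hCnn i
      rw [hT2] at hi
      obtain ⟨m, hm, hi'⟩ := Finset.mem_biUnion.mp hi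
      exact hS2sub m hm hi'
    have : 0 ≤ Ck' / Dk := by rw [hCk']; positivity
    simp only [hA]; linarith
  have hfinal : (2:ℝ) ^ M < (A * B) ^ M := by
    rw [mul_pow]
    calc (2:ℝ)^M < (∏ m ∈ P, f m) * (∏ m ∈ P, g m) := by rw [← hsplit]; exact hE
    _ ≤ A ^ M * B ^ M :=
      mul_le_mul hprodf hprodg (Finset.prod_nonneg hgnn) (by positivity)
  exact lt_of_pow_lt_pow_left₀ M (by positivity) hfinal
end

section
/- Let f be the unique real in (0,1) satisfying ln(1/f) = f/2. For each positive integer ℓ define g_ℓ(t) = 0 if t < ℓ·f, g_ℓ(t) = (t − ℓ·f)/ℓ if ℓ·f ≤ t < ℓ, and g_ℓ(t) = 1 − f if t ≥ ℓ, and define G(t) = 1.5·f − 1 + Σ_{ℓ=1}^∞ g_ℓ(t). Then for every positive integer ℓ, G(ℓ) = 1.5·f − 1 + ℓ − ⌊ℓ/f⌋·f + Σ_{i=ℓ+1}^{⌊ℓ/f⌋} ℓ/i. -/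
/-- Identity (density-total-sharp) in Appendix A of the paper:
`G(ℓ) = 1.5f − 1 + ℓ − ⌊ℓ/f⌋f + ∑_{i=ℓ+1}^{⌊ℓ/f⌋} ℓ/i` for every positive
integer `ℓ`, where `f ∈ (0,1)` is the unique root of `ln(1/f) = f/2`. -/
theorem stmt_14
    (f : ℝ) (hf0 : 0 < f) (hf1 : f < 1)
    (hf : Real.log (1 / f) = f / 2)
    (g : ℕ → ℝ → ℝ)
    (hg : ∀ ℓ : ℕ, 1 ≤ ℓ → ∀ t : ℝ,
      g ℓ t = if t < ℓ * f then 0 else if t < ℓ then (t - ℓ * f) / ℓ else 1 - f)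
    (G : ℝ → ℝ)
    (hG : ∀ t : ℝ, G t = 1.5 * f - 1 + ∑' ℓ : ℕ, g (ℓ + 1) t) :
    ∀ ℓ : ℕ, 1 ≤ ℓ →
      G ℓ = 1.5 * f - 1 + ℓ - (⌊(ℓ : ℝ) / f⌋ : ℝ) * f +
        ∑ i ∈ Finset.Icc (ℓ + 1) (⌊(ℓ : ℝ) / f⌋).toNat, (ℓ : ℝ) / i := by
  intro ℓ hℓ
  have hℓR : (0:ℝ) < ℓ := by exact_mod_cast Nat.lt_of_lt_of_le Nat.zero_lt_one hℓ
  have hfloor_nonneg : 0 ≤ ⌊(ℓ:ℝ)/f⌋ := Int.floor_nonneg.mpr (by positivity)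
  set N : ℕ := (⌊(ℓ:ℝ)/f⌋).toNat with hNdef
  have hNZ : ((N:ℤ)) = ⌊(ℓ:ℝ)/f⌋ := Int.toNat_of_nonneg hfloor_nonneg
  have hNcast : (N:ℝ) = (⌊(ℓ:ℝ)/f⌋ : ℝ) := by exact_mod_cast congrArg (fun z : ℤ => (z:ℝ)) hNZ
  have hNl : ℓ ≤ N := by
    have h1 : (ℓ:ℤ) ≤ ⌊(ℓ:ℝ)/f⌋ := Int.le_floor.mpr (by
      push_cast
      rw [le_div_iff₀ hf0]
      nlinarith)
    omega
  -- key characterization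
  have key_le : ∀ m : ℕ, m ≤ N → (m:ℝ) * f ≤ ℓ := by
    intro m hm
    have h1 : (m:ℤ) ≤ ⌊(ℓ:ℝ)/f⌋ := by omega
    have h2 : ((m:ℤ):ℝ) ≤ (ℓ:ℝ)/f := Int.le_floor.mp h1
    push_cast at h2
    rwa [le_div_iff₀ hf0] at h2
  have key_gt : ∀ m : ℕ, N < m → (ℓ:ℝ) < (m:ℝ) * f := by
    intro m hm
    have h1 : ⌊(ℓ:ℝ)/f⌋ < (m:ℤ) := by omega
    have h2 : (ℓ:ℝ)/f < ((m:ℤ):ℝ) := lt_of_lt_of_le (Int.lt_floor_add_one _) (by exact_mod_cast h1)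
    push_cast at h2
    rwa [div_lt_iff₀ hf0] at h2
  have hzero : ∀ k ∉ Finset.range N, g (k+1) (ℓ:ℝ) = 0 := by
    intro k hk
    rw [Finset.mem_range, not_lt] at hk
    rw [hg (k+1) (by omega)]
    rw [if_pos]
    exact_mod_cast key_gt (k+1) (by omega)
  have htsum : ∑' k : ℕ, g (k+1) (ℓ:ℝ) = ∑ k ∈ Finset.range N, g (k+1) (ℓ:ℝ) :=
    tsum_eq_sum hzero
  have hsplit : ∑ k ∈ Finset.range N, g (k+1) (ℓ:ℝ)
      = ∑ k ∈ Finset.range ℓ, g (k+1) (ℓ:ℝ) + ∑ k ∈ Finset.Ico ℓ N, g (k+1) (ℓ:ℝ) := by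
    rw [Finset.range_eq_Ico, Finset.range_eq_Ico]
    exact (Finset.sum_Ico_consecutive _ (Nat.zero_le ℓ) hNl).symm
  have hsum1 : ∑ k ∈ Finset.range ℓ, g (k+1) (ℓ:ℝ) = (ℓ:ℝ) * (1 - f) := by
    rw [Finset.sum_congr rfl (fun k hk => ?_), Finset.sum_const, Finset.card_range,
      nsmul_eq_mul]
    rw [Finset.mem_range] at hk
    rw [hg (k+1) (by omega)]
    have hkl : ((k:ℝ)+1) ≤ ℓ := by exact_mod_cast hk
    rw [if_neg, if_neg]
    · push_cast; nlinarith
    · push_cast; nlinarith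
  have hsum2 : ∑ k ∈ Finset.Ico ℓ N, g (k+1) (ℓ:ℝ)
      = (∑ k ∈ Finset.Ico ℓ N, (ℓ:ℝ) / (k+1)) - ((N:ℝ) - ℓ) * f := by
    have : ∀ k ∈ Finset.Ico ℓ N, g (k+1) (ℓ:ℝ) = (ℓ:ℝ) / (k+1) - f := by
      intro k hk
      rw [Finset.mem_Ico] at hk
      rw [hg (k+1) (by omega)]
      have h1 : ¬ ((ℓ:ℝ) < ((k+1:ℕ):ℝ) * f) := not_lt.mpr (key_le (k+1) (by omega))
      have h2 : (ℓ:ℝ) < ((k+1:ℕ):ℝ) := by exact_mod_cast Nat.lt_succ_of_le hk.1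
      rw [if_neg h1, if_pos h2]
      have hk0 : ((k:ℝ)+1) ≠ 0 := by positivity
      push_cast
      field_simp
    rw [Finset.sum_congr rfl this, Finset.sum_sub_distrib, Finset.sum_const, Nat.card_Ico,
      nsmul_eq_mul, Nat.cast_sub hNl]
  have hreindex : ∑ k ∈ Finset.Ico ℓ N, (ℓ:ℝ) / (k+1)
      = ∑ i ∈ Finset.Icc (ℓ + 1) N, (ℓ:ℝ) / i := by
    rw [← Finset.Ico_add_one_right_eq_Icc, Finset.sum_Ico_eq_sum_range, Finset.sum_Ico_eq_sum_range]
    have : N + 1 - (ℓ + 1) = N - ℓ := by omega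
    rw [this]
    refine Finset.sum_congr rfl fun i _ => ?_
    congr 1
    push_cast
    ring
  rw [hG, htsum, hsplit, hsum1, hsum2, hreindex, ← hNcast]
  ring
end

section
/- Let f be the unique real in (0,1) satisfying ln(1/f) = f/2. For each positive integer ℓ define g_ℓ(t) = 0 if t < ℓ·f, g_ℓ(t) = (t − ℓ·f)/ℓ if ℓ·f ≤ t < ℓ, and g_ℓ(t) = 1 − f if t ≥ ℓ, and define G(t) = 1.5·f − 1 + Σ_{ℓ=1}^∞ g_ℓ(t). Then for every integer ℓ ≥ 5, G(ℓ+1)/(ℓ+1) > G(ℓ)/ℓ. -/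
section Aux

private lemma fbds (f : ℝ) (hf0 : 0 < f) (hf1 : f < 1)
    (hf : Real.log (1 / f) = f / 2) : 0.7034 < f ∧ f < 0.7035 := by
  have hfexp : f = Real.exp (-(f/2)) := by
    have h1 : Real.log f = -(f/2) := by
      rw [Real.log_div one_ne_zero (ne_of_gt hf0), Real.log_one] at hf
      linarith
    rw [← h1, Real.exp_log hf0]
  have hexpup : Real.exp (0.3517 : ℝ) < 1 / 0.7034 := by
    have h := Real.exp_bound' (x := (0.3517 : ℝ)) (by norm_num) (by norm_num) (n := 6) (by norm_num)
    calc Real.exp (0.3517 : ℝ) ≤ _ := h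
      _ < 1 / 0.7034 := by
        norm_num [Finset.sum_range_succ, Nat.factorial]
  have hexplo : (1 : ℝ) / 0.7035 < Real.exp (0.35175 : ℝ) := by
    have h := Real.sum_le_exp_of_nonneg (x := (0.35175 : ℝ)) (by norm_num) 6
    refine lt_of_lt_of_le ?_ h
    norm_num [Finset.sum_range_succ, Nat.factorial]
  constructor
  · by_contra hle
    push_neg at hle
    have h1 : Real.exp (-(0.3517 : ℝ)) ≤ Real.exp (-(f/2)) := by
      apply Real.exp_le_exp.2; linarith
    have h2 : (0.7034 : ℝ) < Real.exp (-(0.3517 : ℝ)) := by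
      rw [Real.exp_neg]
      rw [lt_inv_comm₀ (by norm_num) (Real.exp_pos _)]
      calc Real.exp (0.3517:ℝ) < 1/0.7034 := hexpup
        _ = (0.7034:ℝ)⁻¹ := by norm_num
    linarith [hfexp ▸ le_trans h2.le h1]
  · by_contra hle
    push_neg at hle
    have h1 : Real.exp (-(f/2)) ≤ Real.exp (-(0.35175 : ℝ)) := by
      apply Real.exp_le_exp.2; linarith
    have h2 : Real.exp (-(0.35175 : ℝ)) < 0.7035 := by
      rw [Real.exp_neg]
      rw [inv_lt_comm₀ (Real.exp_pos _) (by norm_num)]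
      calc (0.7035:ℝ)⁻¹ = 1/0.7035 := by norm_num
        _ < Real.exp (0.35175:ℝ) := hexplo
    linarith [hfexp ▸ lt_of_le_of_lt h1 h2]

private lemma Gval (f : ℝ) (hf0 : 0 < f) (hf1 : f < 1)
    (g : ℕ → ℝ → ℝ)
    (hg : ∀ ℓ : ℕ, 1 ≤ ℓ → ∀ t : ℝ,
      g ℓ t = if t < ℓ * f then 0 else if t < ℓ then (t - ℓ * f) / ℓ else 1 - f)
    (G : ℝ → ℝ)
    (hG : ∀ t : ℝ, G t = 1.5 * f - 1 + ∑' ℓ : ℕ, g (ℓ + 1) t)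
    (n : ℕ) :
    G (n : ℝ) = 1.5 * f - 1 + n * (1 - f) +
      ∑ k ∈ Finset.Ico n (Nat.floor ((n : ℝ) / f)),
        ((n : ℝ) - ((k : ℝ) + 1) * f) / ((k : ℝ) + 1) := by
  set m := Nat.floor ((n : ℝ) / f) with hm
  have hnf0 : (0:ℝ) ≤ (n : ℝ) / f := by positivity
  have hmn : n ≤ m := by
    apply Nat.le_floor
    rw [le_div_iff₀ hf0]
    nlinarith [Nat.cast_nonneg (α := ℝ) n]
  have hsupp : ∀ k ∉ Finset.range m, g (k + 1) (n : ℝ) = 0 := by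
    intro k hk
    rw [Finset.mem_range, not_lt] at hk
    rw [hg (k+1) (Nat.succ_le_succ (Nat.zero_le k))]
    rw [if_pos]
    have h1 : ((n : ℝ) / f) < (k : ℝ) + 1 := by
      calc ((n:ℝ)/f) < m + 1 := Nat.lt_floor_add_one _
        _ ≤ (k:ℝ) + 1 := by
          have : (m:ℝ) ≤ (k:ℝ) := Nat.cast_le.2 hk
          linarith
    rw [div_lt_iff₀ hf0] at h1
    push_cast
    linarith
  rw [hG, tsum_eq_sum hsupp]
  have hsplit : Finset.range m = Finset.Ico 0 n ∪ Finset.Ico n m := by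
    rw [Finset.range_eq_Ico, Finset.Ico_union_Ico_eq_Ico (Nat.zero_le n) hmn]
  rw [hsplit, Finset.sum_union (by
    apply Finset.Ico_disjoint_Ico_consecutive)]
  have h1 : ∑ k ∈ Finset.Ico 0 n, g (k+1) (n:ℝ) = n * (1 - f) := by
    rw [Finset.sum_congr rfl (fun k hk => ?_), Finset.sum_const, Nat.card_Ico,
      Nat.sub_zero, nsmul_eq_mul]
    · rw [hg (k+1) (Nat.succ_le_succ (Nat.zero_le k))]
      rw [Finset.mem_Ico] at hk
      have hkn : (k:ℝ) + 1 ≤ (n:ℝ) := by exact_mod_cast Nat.succ_le_of_lt hk.2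
      rw [if_neg, if_neg]
      · push_cast; linarith
      · push_cast
        nlinarith [hkn]
  rw [h1]
  have h2 : ∀ k ∈ Finset.Ico n m, g (k+1) (n:ℝ) =
      ((n : ℝ) - ((k : ℝ) + 1) * f) / ((k : ℝ) + 1) := by
    intro k hk
    rw [Finset.mem_Ico] at hk
    rw [hg (k+1) (Nat.succ_le_succ (Nat.zero_le k))]
    have hk1m : (k:ℝ) + 1 ≤ (m:ℝ) := by exact_mod_cast Nat.succ_le_of_lt hk.2
    have hmle : (m:ℝ) ≤ (n:ℝ)/f := Nat.floor_le hnf0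
    have hfle : ((k:ℝ)+1) * f ≤ (n:ℝ) := by
      rw [← div_mul_cancel₀ (n:ℝ) (ne_of_gt hf0)]
      apply mul_le_mul_of_nonneg_right _ hf0.le
      linarith
    have hnk : (n:ℝ) < (k:ℝ) + 1 := by
      have : (n:ℝ) ≤ (k:ℝ) := Nat.cast_le.2 hk.1
      linarith
    rw [if_neg (by push_cast; linarith), if_pos (by push_cast; linarith)]
    push_cast
    ring
  rw [Finset.sum_congr rfl h2]
  ring

private lemma F1' (f nr : ℝ) (h1 : 0.7034 < f) (h2 : f < 0.7035) (hn : 5 ≤ nr) :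
    0 < (nr + 1 - f) * (2 - 3.5*f - nr*f) + f*nr*(nr+1) := by
  have hc1 : 0 < 2 - 3.5*f + f^2 := by nlinarith
  nlinarith [mul_nonneg (by linarith : (0:ℝ) ≤ nr - 5) hc1.le]

private lemma F2' (f nr : ℝ) (h1 : 0.7034 < f) (h2 : f < 0.7035) (hn : 5 ≤ nr) :
    f*nr*(nr+1) ≤ (nr + 1 - f)^2 := by
  nlinarith [mul_nonneg (by linarith : (0:ℝ) ≤ nr - 5) (by linarith : (0:ℝ) ≤ nr - 5),
    mul_nonneg (by linarith : (0:ℝ) ≤ nr - 5) (by linarith : (0:ℝ) ≤ 1 - f)]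

private lemma F3' (f nr : ℝ) (h1 : 0.7034 < f) (h2 : f < 0.7035) (hn : 5 ≤ nr) :
    (nr+1-f)^2*(nr+1)^2 ≤ f*nr*(nr+1)*((nr+1-f)^2+(nr+1)^2) := by
  have hi : 0 ≤ (nr+1)^3*(2*f-1) - f^2*((nr+1)*(2*nr+1) - nr*f) := by
    have hb : (0:ℝ) ≤ (nr+1)^2*(2*f-1) - f^2*(2*nr+1) := by
      nlinarith [mul_nonneg (by linarith : (0:ℝ) ≤ nr - 5) (by linarith : (0:ℝ) ≤ nr - 5),
        mul_nonneg (by linarith : (0:ℝ) ≤ nr - 5) (by linarith : (0:ℝ) ≤ 2*f - 1)]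
    have := mul_nonneg (by linarith : (0:ℝ) ≤ nr + 1) hb
    nlinarith [pow_pos (by linarith : (0:ℝ) < f) 3,
      mul_pos (by linarith : (0:ℝ) < nr) (pow_pos (by linarith : (0:ℝ) < f) 3)]
  nlinarith [mul_nonneg (by linarith : (0:ℝ) ≤ nr + 1) hi]

end Aux

set_option maxHeartbeats 1600000 in
/-- Key monotonicity claim of Appendix A of the paper: the sequence `G(ℓ)/ℓ`
is strictly increasing for integers `ℓ ≥ 5`, where `f ∈ (0,1)` is the unique
root of `ln(1/f) = f/2`. -/
theorem stmt_15
    (f : ℝ) (hf0 : 0 < f) (hf1 : f < 1)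
    (hf : Real.log (1 / f) = f / 2)
    (g : ℕ → ℝ → ℝ)
    (hg : ∀ ℓ : ℕ, 1 ≤ ℓ → ∀ t : ℝ,
      g ℓ t = if t < ℓ * f then 0 else if t < ℓ then (t - ℓ * f) / ℓ else 1 - f)
    (G : ℝ → ℝ)
    (hG : ∀ t : ℝ, G t = 1.5 * f - 1 + ∑' ℓ : ℕ, g (ℓ + 1) t) :
    ∀ ℓ : ℕ, 5 ≤ ℓ →
      G ((ℓ : ℝ) + 1) / ((ℓ : ℝ) + 1) > G (ℓ : ℝ) / (ℓ : ℝ) := by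
  intro n hn5
  obtain ⟨hf34, hf35⟩ := fbds f hf0 hf1 hf
  have hnr5 : (5:ℝ) ≤ (n:ℝ) := by exact_mod_cast hn5
  have hnr0 : (0:ℝ) < (n:ℝ) := by linarith
  have hnr10 : (0:ℝ) < (n:ℝ) + 1 := by linarith
  -- G values
  have hGn := Gval f hf0 hf1 g hg G hG n
  have hGn1 := Gval f hf0 hf1 g hg G hG (n+1)
  push_cast at hGn1
  set m := Nat.floor ((n : ℝ) / f) with hmdef
  set m' := Nat.floor (((n : ℝ) + 1) / f) with hm'def
  -- basic floor facts
  have hmle : (m:ℝ) ≤ (n:ℝ)/f := Nat.floor_le (by positivity)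
  have hmlt : (n:ℝ)/f < (m:ℝ) + 1 := Nat.lt_floor_add_one _
  have hmf : (m:ℝ) * f ≤ (n:ℝ) := by
    rw [← div_mul_cancel₀ (n:ℝ) (ne_of_gt hf0)]
    exact mul_le_mul_of_nonneg_right hmle hf0.le
  have hm2 : n + 2 ≤ m := by
    apply Nat.le_floor
    rw [le_div_iff₀ hf0]
    push_cast
    nlinarith
  have hm'1 : m + 1 ≤ m' := by
    apply Nat.le_floor
    rw [le_div_iff₀ hf0]
    push_cast
    nlinarith
  have hmltf : (n:ℝ) < ((m:ℝ)+1)*f := by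
    rw [div_lt_iff₀ hf0] at hmlt
    exact hmlt
  have hm'2 : m' ≤ m + 2 := by
    have h1 : ((n:ℝ)+1)/f < ((m:ℝ) + 3) := by
      rw [div_lt_iff₀ hf0]
      nlinarith
    have h2 : m' < m + 3 := by
      rw [hm'def]
      refine (Nat.floor_lt (by positivity : (0:ℝ) ≤ ((n:ℝ)+1)/f)).2 ?_
      push_cast
      linarith
    omega
  -- peel the sums
  have hnltm : n < m := by omega
  have hn1lem : n + 1 ≤ m := by omega
  have hpeelS : (∑ k ∈ Finset.Ico n m, ((n:ℝ) - ((k:ℝ)+1)*f)/((k:ℝ)+1)) =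
      ((n:ℝ) - ((n:ℝ)+1)*f)/((n:ℝ)+1) +
      ∑ k ∈ Finset.Ico (n+1) m, ((n:ℝ) - ((k:ℝ)+1)*f)/((k:ℝ)+1) := by
    exact Finset.sum_eq_sum_Ico_succ_bot hnltm _
  have hsum2 : (n:ℝ) * (∑ k ∈ Finset.Ico (n+1) m, ((n:ℝ)+1 - ((k:ℝ)+1)*f)/((k:ℝ)+1)) -
      ((n:ℝ)+1) * (∑ k ∈ Finset.Ico (n+1) m, ((n:ℝ) - ((k:ℝ)+1)*f)/((k:ℝ)+1)) =
      ((m:ℝ) - ((n:ℝ)+1)) * f := by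
    have hterm : ∀ k ∈ Finset.Ico (n+1) m,
        ((n:ℝ)*(((n:ℝ)+1 - ((k:ℝ)+1)*f)/((k:ℝ)+1))
          - ((n:ℝ)+1)*(((n:ℝ) - ((k:ℝ)+1)*f)/((k:ℝ)+1))) = f := by
      intro k _
      have hk0 : ((k:ℝ)+1) ≠ 0 := by positivity
      field_simp
      ring
    calc (n:ℝ) * (∑ k ∈ Finset.Ico (n+1) m, ((n:ℝ)+1 - ((k:ℝ)+1)*f)/((k:ℝ)+1)) -
        ((n:ℝ)+1) * (∑ k ∈ Finset.Ico (n+1) m, ((n:ℝ) - ((k:ℝ)+1)*f)/((k:ℝ)+1))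
        = ∑ k ∈ Finset.Ico (n+1) m, ((n:ℝ)*(((n:ℝ)+1 - ((k:ℝ)+1)*f)/((k:ℝ)+1))
          - ((n:ℝ)+1)*(((n:ℝ) - ((k:ℝ)+1)*f)/((k:ℝ)+1))) := by
          rw [Finset.mul_sum, Finset.mul_sum, ← Finset.sum_sub_distrib]
      _ = ∑ _k ∈ Finset.Ico (n+1) m, f := Finset.sum_congr rfl hterm
      _ = ((m:ℝ) - ((n:ℝ)+1)) * f := by
          rw [Finset.sum_const, Nat.card_Ico, nsmul_eq_mul, Nat.cast_sub hn1lem]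
          push_cast; ring
  -- the goal as a positivity statement
  rw [gt_iff_lt, div_lt_div_iff₀ hnr0 hnr10, ← sub_pos]
  -- numeric facts
  have hF1 := F1' f (n:ℝ) hf34 hf35 hnr5
  have hF2 := F2' f (n:ℝ) hf34 hf35 hnr5
  have hx0pos : (0:ℝ) < (n:ℝ) + 1 - f := by linarith
  have hM1 : (0:ℝ) < (m:ℝ) + 1 := by positivity
  have hM2 : (0:ℝ) < (m:ℝ) + 2 := by positivity
  -- case split on m'
  have hcases : m' = m + 1 ∨ m' = m + 2 := by omega
  rcases hcases with hc | hc
  · -- Case 1 : m' = m + 1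
    have hconstr : (n:ℝ) + 1 < f * ((m:ℝ) + 2) := by
      have h1 : ((n:ℝ)+1)/f < (m':ℝ) + 1 := Nat.lt_floor_add_one _
      rw [div_lt_iff₀ hf0] at h1
      rw [hc] at h1
      push_cast at h1
      nlinarith
    have hpeelS' : (∑ k ∈ Finset.Ico (n+1) m', ((n:ℝ)+1 - ((k:ℝ)+1)*f)/((k:ℝ)+1)) =
        (∑ k ∈ Finset.Ico (n+1) m, ((n:ℝ)+1 - ((k:ℝ)+1)*f)/((k:ℝ)+1)) +
        ((n:ℝ)+1 - ((m:ℝ)+1)*f)/((m:ℝ)+1) := by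
      rw [hc]
      exact Finset.sum_Ico_succ_top hn1lem _
    have key : G ((n:ℝ)+1) * (n:ℝ) - G (n:ℝ) * ((n:ℝ)+1) =
        (1 - 1.5*f) + (((m:ℝ) - ((n:ℝ)+1))*f
          + (n:ℝ)*(((n:ℝ)+1 - ((m:ℝ)+1)*f)/((m:ℝ)+1))
          - ((n:ℝ)+1)*(((n:ℝ) - ((n:ℝ)+1)*f)/((n:ℝ)+1))) := by
      rw [hGn, hGn1, hpeelS, hpeelS']
      linear_combination hsum2
    rw [key]
    -- express as P1 / (m+1)
    have hrw : (1 - 1.5*f) + (((m:ℝ) - ((n:ℝ)+1))*f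
          + (n:ℝ)*(((n:ℝ)+1 - ((m:ℝ)+1)*f)/((m:ℝ)+1))
          - ((n:ℝ)+1)*(((n:ℝ) - ((n:ℝ)+1)*f)/((n:ℝ)+1))) =
        (((1 - 1.5*f) + f*(m:ℝ) - (n:ℝ) - (n:ℝ)*f) * ((m:ℝ)+1) + (n:ℝ)*((n:ℝ)+1)) / ((m:ℝ)+1) := by
      field_simp
      ring
    rw [hrw]
    apply div_pos _ hM1
    -- positivity of P1 via certificate
    set P1 := ((1 - 1.5*f) + f*(m:ℝ) - (n:ℝ) - (n:ℝ)*f) * ((m:ℝ)+1) + (n:ℝ)*((n:ℝ)+1) with hP1def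
    have hx : (n:ℝ) + 1 - f < f * ((m:ℝ)+1) := by nlinarith
    have hxx : f*(n:ℝ)*((n:ℝ)+1) ≤ f*((m:ℝ)+1)*((n:ℝ)+1-f) := by
      nlinarith [mul_lt_mul_of_pos_left hx hx0pos]
    have cert : ((n:ℝ)+1-f) * (f * P1) =
        (f*((m:ℝ)+1) - ((n:ℝ)+1-f)) * (f*((m:ℝ)+1)*((n:ℝ)+1-f) - f*(n:ℝ)*((n:ℝ)+1))
        + f*((m:ℝ)+1) * (((n:ℝ)+1-f)*(2-3.5*f-(n:ℝ)*f) + f*(n:ℝ)*((n:ℝ)+1)) := by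
      rw [hP1def]; ring
    have hpos : 0 < ((n:ℝ)+1-f) * (f * P1) := by
      rw [cert]
      have t1 : 0 ≤ (f*((m:ℝ)+1) - ((n:ℝ)+1-f)) * (f*((m:ℝ)+1)*((n:ℝ)+1-f) - f*(n:ℝ)*((n:ℝ)+1)) :=
        mul_nonneg (by linarith) (by linarith)
      have t2 : 0 < f*((m:ℝ)+1) * (((n:ℝ)+1-f)*(2-3.5*f-(n:ℝ)*f) + f*(n:ℝ)*((n:ℝ)+1)) :=
        mul_pos (by positivity) hF1
      linarith
    by_contra hle
    push_neg at hle
    have hq0 : (0:ℝ) < ((n:ℝ)+1-f) * f := mul_pos hx0pos hf0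
    have heq : ((n:ℝ)+1-f) * (f * P1) = (((n:ℝ)+1-f) * f) * P1 := by ring
    rw [heq] at hpos
    exact absurd hpos (not_lt.2 (mul_nonpos_of_nonneg_of_nonpos hq0.le hle))
  · -- Case 2 : m' = m + 2
    have hF3 := F3' f (n:ℝ) hf34 hf35 hnr5
    have hconstr : f * ((m:ℝ) + 2) ≤ (n:ℝ) + 1 := by
      have h1 : (m':ℝ) ≤ ((n:ℝ)+1)/f := Nat.floor_le (by positivity)
      rw [hc] at h1
      push_cast at h1
      rw [le_div_iff₀ hf0] at h1
      nlinarith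
    have hpeelS' : (∑ k ∈ Finset.Ico (n+1) m', ((n:ℝ)+1 - ((k:ℝ)+1)*f)/((k:ℝ)+1)) =
        (∑ k ∈ Finset.Ico (n+1) m, ((n:ℝ)+1 - ((k:ℝ)+1)*f)/((k:ℝ)+1)) +
        ((n:ℝ)+1 - ((m:ℝ)+1)*f)/((m:ℝ)+1) +
        ((n:ℝ)+1 - ((m:ℝ)+2)*f)/((m:ℝ)+2) := by
      rw [hc, show m + 2 = (m+1) + 1 from rfl]
      rw [Finset.sum_Ico_succ_top (by omega : n+1 ≤ m+1) _]
      rw [Finset.sum_Ico_succ_top hn1lem _]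
      push_cast
      ring
    have key : G ((n:ℝ)+1) * (n:ℝ) - G (n:ℝ) * ((n:ℝ)+1) =
        (1 - 1.5*f) + (((m:ℝ) - ((n:ℝ)+1))*f
          + (n:ℝ)*(((n:ℝ)+1 - ((m:ℝ)+1)*f)/((m:ℝ)+1))
          + (n:ℝ)*(((n:ℝ)+1 - ((m:ℝ)+2)*f)/((m:ℝ)+2))
          - ((n:ℝ)+1)*(((n:ℝ) - ((n:ℝ)+1)*f)/((n:ℝ)+1))) := by
      rw [hGn, hGn1, hpeelS, hpeelS']
      linear_combination hsum2
    rw [key]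
    have hrw : (1 - 1.5*f) + (((m:ℝ) - ((n:ℝ)+1))*f
          + (n:ℝ)*(((n:ℝ)+1 - ((m:ℝ)+1)*f)/((m:ℝ)+1))
          + (n:ℝ)*(((n:ℝ)+1 - ((m:ℝ)+2)*f)/((m:ℝ)+2))
          - ((n:ℝ)+1)*(((n:ℝ) - ((n:ℝ)+1)*f)/((n:ℝ)+1))) =
        (((1 - 1.5*f) + f*(m:ℝ) - (n:ℝ) - 2*(n:ℝ)*f) * ((m:ℝ)+1) * ((m:ℝ)+2)
          + (n:ℝ)*((n:ℝ)+1)*(((m:ℝ)+2) + ((m:ℝ)+1))) / (((m:ℝ)+1) * ((m:ℝ)+2)) := by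
      field_simp
      ring
    rw [hrw]
    apply div_pos _ (mul_pos hM1 hM2)
    set P2 := ((1 - 1.5*f) + f*(m:ℝ) - (n:ℝ) - 2*(n:ℝ)*f) * ((m:ℝ)+1) * ((m:ℝ)+2)
      + (n:ℝ)*((n:ℝ)+1)*(((m:ℝ)+2) + ((m:ℝ)+1)) with hP2def
    -- abbreviations
    have hu : 0 ≤ ((n:ℝ)+1-f) - f*((m:ℝ)+1) := by nlinarith
    have hq : 0 ≤ f*((m:ℝ)+2)*((n:ℝ)+1) - f*(n:ℝ)*((n:ℝ)+1) := by
      have hnm : (n:ℝ) ≤ (m:ℝ) := by exact_mod_cast Nat.le_of_lt hnltm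
      nlinarith [mul_nonneg (mul_nonneg hf0.le hnr10.le) (by linarith : (0:ℝ) ≤ (m:ℝ)+2-(n:ℝ))]
    have hB : 0 ≤ f*((n:ℝ)*((n:ℝ)+1))*((f*((m:ℝ)+2))*((n:ℝ)+1) + (f*((m:ℝ)+1))*((n:ℝ)+1-f))
        - (f*((m:ℝ)+1))*(f*((m:ℝ)+2))*((n:ℝ)+1-f)*((n:ℝ)+1) := by
      have idB : f*((n:ℝ)*((n:ℝ)+1))*((f*((m:ℝ)+2))*((n:ℝ)+1) + (f*((m:ℝ)+1))*((n:ℝ)+1-f))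
          - (f*((m:ℝ)+1))*(f*((m:ℝ)+2))*((n:ℝ)+1-f)*((n:ℝ)+1) =
          (f*(n:ℝ)*((n:ℝ)+1)*((((n:ℝ)+1-f))^2+(((n:ℝ)+1))^2) - (((n:ℝ)+1-f))^2*(((n:ℝ)+1))^2)
          + (((n:ℝ)+1-f)*((((n:ℝ)+1-f)) - f*((m:ℝ)+1))) * (f*((m:ℝ)+2)*((n:ℝ)+1) - f*(n:ℝ)*((n:ℝ)+1))
          + (((n:ℝ)+1)*((((n:ℝ)+1-f)) - f*((m:ℝ)+1))) * ((((n:ℝ)+1-f))^2 - f*(n:ℝ)*((n:ℝ)+1)) := by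
        ring
      rw [idB]
      have t1 : 0 ≤ (f*(n:ℝ)*((n:ℝ)+1)*((((n:ℝ)+1-f))^2+(((n:ℝ)+1))^2) - (((n:ℝ)+1-f))^2*(((n:ℝ)+1))^2) := by
        linarith
      have t2 : 0 ≤ (((n:ℝ)+1-f)*((((n:ℝ)+1-f)) - f*((m:ℝ)+1))) * (f*((m:ℝ)+2)*((n:ℝ)+1) - f*(n:ℝ)*((n:ℝ)+1)) :=
        mul_nonneg (mul_nonneg hx0pos.le hu) hq
      have t3 : 0 ≤ (((n:ℝ)+1)*((((n:ℝ)+1-f)) - f*((m:ℝ)+1))) * ((((n:ℝ)+1-f))^2 - f*(n:ℝ)*((n:ℝ)+1)) :=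
        mul_nonneg (mul_nonneg hnr10.le hu) (by linarith)
      linarith
    have cert : ((n:ℝ)+1-f) * (((n:ℝ)+1) * (f^2 * P2)) =
        (((n:ℝ)+1-f) - f*((m:ℝ)+1)) *
          (f*((n:ℝ)*((n:ℝ)+1))*((f*((m:ℝ)+2))*((n:ℝ)+1) + (f*((m:ℝ)+1))*((n:ℝ)+1-f))
            - (f*((m:ℝ)+1))*(f*((m:ℝ)+2))*((n:ℝ)+1-f)*((n:ℝ)+1))
        + (f*((m:ℝ)+1))*(f*((m:ℝ)+2))*((n:ℝ)+1) *
          (((n:ℝ)+1-f)*(2-3.5*f-(n:ℝ)*f) + f*(n:ℝ)*((n:ℝ)+1)) := by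
      rw [hP2def]; ring
    have hpos : 0 < ((n:ℝ)+1-f) * (((n:ℝ)+1) * (f^2 * P2)) := by
      rw [cert]
      have t1 : 0 ≤ (((n:ℝ)+1-f) - f*((m:ℝ)+1)) *
          (f*((n:ℝ)*((n:ℝ)+1))*((f*((m:ℝ)+2))*((n:ℝ)+1) + (f*((m:ℝ)+1))*((n:ℝ)+1-f))
            - (f*((m:ℝ)+1))*(f*((m:ℝ)+2))*((n:ℝ)+1-f)*((n:ℝ)+1)) :=
        mul_nonneg hu hB
      have t2 : 0 < (f*((m:ℝ)+1))*(f*((m:ℝ)+2))*((n:ℝ)+1) *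
          (((n:ℝ)+1-f)*(2-3.5*f-(n:ℝ)*f) + f*(n:ℝ)*((n:ℝ)+1)) :=
        mul_pos (by positivity) hF1
      linarith
    by_contra hle
    push_neg at hle
    have hq0 : (0:ℝ) < ((n:ℝ)+1-f) * (((n:ℝ)+1) * f^2) :=
      mul_pos hx0pos (mul_pos hnr10 (pow_pos hf0 2))
    have heq : ((n:ℝ)+1-f) * (((n:ℝ)+1) * (f^2 * P2)) = (((n:ℝ)+1-f) * (((n:ℝ)+1) * f^2)) * P2 := by
      ring
    rw [heq] at hpos
    exact absurd hpos (not_lt.2 (mul_nonpos_of_nonneg_of_nonpos hq0.le hle))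
end

section
/- Let f be the unique real in (0,1) satisfying ln(1/f) = f/2. For each positive integer ℓ define g_ℓ(t) = 0 if t < ℓ·f, g_ℓ(t) = (t − ℓ·f)/ℓ if ℓ·f ≤ t < ℓ, and g_ℓ(t) = 1 − f if t ≥ ℓ, and define G(t) = 1.5·f − 1 + Σ_{ℓ=1}^∞ g_ℓ(t). Then G(ℓ)/ℓ → f/2 as the positive integer ℓ → ∞. -/
open Filter Finset Real Topology

/-- Limiting value computed in Appendix A of the paper: `G(ℓ)/ℓ → f/2` as the
positive integer `ℓ → ∞`, where `f ∈ (0,1)` is the unique root of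
`ln(1/f) = f/2`. -/
theorem stmt_16
    (f : ℝ) (hf0 : 0 < f) (hf1 : f < 1)
    (hf : Real.log (1 / f) = f / 2)
    (g : ℕ → ℝ → ℝ)
    (hg : ∀ ℓ : ℕ, 1 ≤ ℓ → ∀ t : ℝ,
      g ℓ t = if t < ℓ * f then 0 else if t < ℓ then (t - ℓ * f) / ℓ else 1 - f)
    (G : ℝ → ℝ)
    (hG : ∀ t : ℝ, G t = 1.5 * f - 1 + ∑' ℓ : ℕ, g (ℓ + 1) t) :
    Filter.Tendsto (fun ℓ : ℕ => G (ℓ : ℝ) / (ℓ : ℝ)) Filter.atTop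
      (nhds (f / 2)) := by
  have hfne : f ≠ 0 := ne_of_gt hf0
  set m : ℕ → ℕ := fun n => ⌊(n : ℝ) / f⌋₊ with hmdef
  have hnm : ∀ n : ℕ, n ≤ m n := by
    intro n
    apply Nat.le_floor
    rw [le_div_iff₀ hf0]
    nlinarith [(Nat.cast_nonneg n : (0:ℝ) ≤ n)]
  have hmle : ∀ n : ℕ, (m n : ℝ) ≤ (n : ℝ) / f := fun n => Nat.floor_le (by positivity)
  have hmgt : ∀ n : ℕ, (n : ℝ) / f - 1 < m n := by
    intro n
    have := Nat.lt_floor_add_one ((n : ℝ) / f)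
    simp only [hmdef]
    linarith
  -- harmonic sums over Ico
  have hH : ∀ a b : ℕ, a ≤ b →
      ∑ k ∈ Finset.Ico a b, (1:ℝ)/((k:ℝ)+1) = (harmonic b : ℝ) - harmonic a := by
    intro a b hab
    rw [Finset.sum_Ico_eq_sub _ hab]
    simp only [harmonic]
    push_cast
    simp [one_div]
  -- key identity for n ≥ 1
  have hkey : ∀ n : ℕ, 1 ≤ n → G n / n =
      (1.5*f-1) * (1/(n:ℝ)) + (1-f) + ((harmonic (m n) : ℝ) - harmonic n)
        - f * ((m n : ℝ)/n - 1) := by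
    intro n hn
    have hn0 : (0:ℝ) < n := by exact_mod_cast hn
    have hsum : (∑' ℓ : ℕ, g (ℓ + 1) (n:ℝ)) = ∑ k ∈ Finset.range (m n), g (k+1) (n:ℝ) := by
      apply tsum_eq_sum
      intro k hk
      simp only [Finset.mem_range, not_lt] at hk
      rw [hg (k+1) (by omega)]
      rw [if_pos]
      have h1 : (n:ℝ)/f < ((k+1 : ℕ) : ℝ) :=
        (Nat.floor_lt (by positivity)).mp (Nat.lt_succ_of_le hk)
      rw [div_lt_iff₀ hf0] at h1
      push_cast at h1 ⊢
      linarith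
    have e1 : ∀ k ∈ Finset.range n, g (k+1) (n:ℝ) = 1 - f := by
      intro k hk
      simp only [Finset.mem_range] at hk
      have hk1 : ((k:ℝ)+1) ≤ n := by exact_mod_cast Nat.succ_le_of_lt hk
      have h1 : ¬ ((n:ℝ) < ((k+1:ℕ):ℝ) * f) := by push_cast; nlinarith
      have h2 : ¬ ((n:ℝ) < ((k+1:ℕ):ℝ)) := by push_cast; linarith
      rw [hg (k+1) (by omega), if_neg h1, if_neg h2]
    have e2 : ∀ k ∈ Finset.Ico n (m n), g (k+1) (n:ℝ) = (n:ℝ) * (1/((k:ℝ)+1)) - f := by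
      intro k hk
      simp only [Finset.mem_Ico] at hk
      have hk1 : (n:ℝ) ≤ k := by exact_mod_cast hk.1
      have hk2 : ((k:ℝ)+1) ≤ (n:ℝ)/f := by
        have : ((k+1:ℕ):ℝ) ≤ (m n : ℝ) := by exact_mod_cast hk.2
        push_cast at this
        linarith [hmle n]
      have hk2' : ((k:ℝ)+1) * f ≤ n := by
        rw [← le_div_iff₀ hf0]; exact hk2
      have h1 : ¬ ((n:ℝ) < ((k+1:ℕ):ℝ) * f) := by push_cast; linarith
      have h2 : ((n:ℝ) < ((k+1:ℕ):ℝ)) := by push_cast; linarith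
      rw [hg (k+1) (by omega), if_neg h1, if_pos h2]
      have hkpos : ((k:ℝ)+1) ≠ 0 := by positivity
      push_cast
      field_simp
    have hsplit : ∑ k ∈ Finset.range (m n), g (k+1) (n:ℝ)
        = (n:ℝ)*(1-f) + ((n:ℝ) * ((harmonic (m n):ℝ) - harmonic n) - f * ((m n : ℝ) - n)) := by
      rw [← Finset.sum_range_add_sum_Ico _ (hnm n)]
      rw [Finset.sum_congr rfl e1, Finset.sum_congr rfl e2]
      rw [Finset.sum_const, Finset.card_range, nsmul_eq_mul]
      rw [Finset.sum_sub_distrib, ← Finset.mul_sum, hH n (m n) (hnm n)]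
      rw [Finset.sum_const, Nat.card_Ico, nsmul_eq_mul]
      rw [Nat.cast_sub (hnm n)]
      ring
    rw [hG, hsum, hsplit]
    field_simp
    ring
  -- limits
  have t1 : Tendsto (fun n : ℕ => (1.5*f-1) * (1/(n:ℝ))) atTop (𝓝 0) := by
    simpa using tendsto_one_div_atTop_nhds_zero_nat.const_mul (1.5*f-1)
  have tratio : Tendsto (fun n : ℕ => (m n : ℝ)/n) atTop (𝓝 (1/f)) := by
    have hlow : Tendsto (fun n : ℕ => 1/f - 1/(n:ℝ)) atTop (𝓝 (1/f)) := by
      simpa using (tendsto_const_nhds (x := 1/f) (f := atTop)).sub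
        tendsto_one_div_atTop_nhds_zero_nat
    apply tendsto_of_tendsto_of_tendsto_of_le_of_le' hlow
      (tendsto_const_nhds (x := 1/f))
    · filter_upwards [eventually_ge_atTop 1] with n hn
      have hn0 : (0:ℝ) < n := by exact_mod_cast hn
      rw [le_div_iff₀ hn0]
      have h := hmgt n
      have : (1/f - 1/(n:ℝ)) * n = (n:ℝ)/f - 1 := by field_simp
      linarith
    · filter_upwards [eventually_ge_atTop 1] with n hn
      have hn0 : (0:ℝ) < n := by exact_mod_cast hn
      rw [div_le_iff₀ hn0]
      have h := hmle n
      have : (n:ℝ)/f = (1/f) * n := by ring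
      linarith
  have tmtop : Tendsto m atTop atTop := tendsto_atTop_mono hnm tendsto_id
  have tlog : Tendsto (fun n : ℕ => Real.log ((m n : ℝ)/n)) atTop (𝓝 (Real.log (1/f))) :=
    (Real.continuousAt_log (one_div_pos.mpr hf0).ne').tendsto.comp tratio
  have tHm : Tendsto (fun n : ℕ => (harmonic (m n) : ℝ) - Real.log (m n)) atTop
      (𝓝 Real.eulerMascheroniConstant) := Real.tendsto_harmonic_sub_log.comp tmtop
  have tH : Tendsto (fun n : ℕ => ((harmonic (m n) : ℝ) - harmonic n)) atTop (𝓝 (f/2)) := by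
    have h := (tHm.sub Real.tendsto_harmonic_sub_log).add tlog
    rw [sub_self, zero_add, hf] at h
    apply h.congr'
    filter_upwards [eventually_ge_atTop 1] with n hn
    have hn0 : (0:ℝ) < n := by exact_mod_cast hn
    have hm0 : (0:ℝ) < m n := lt_of_lt_of_le hn0 (by exact_mod_cast hnm n)
    rw [Real.log_div hm0.ne' hn0.ne']
    ring
  have tlast : Tendsto (fun n : ℕ => f * ((m n : ℝ)/n - 1)) atTop (𝓝 (1 - f)) := by
    have h := (tratio.sub (tendsto_const_nhds (x := (1:ℝ)))).const_mul f
    have : f * (1/f - 1) = 1 - f := by field_simp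
    rwa [this] at h
  have total := ((t1.add (tendsto_const_nhds (x := (1-f:ℝ)))).add tH).sub tlast
  have heq : (0:ℝ) + (1-f) + f/2 - (1-f) = f/2 := by ring
  rw [heq] at total
  apply total.congr'
  filter_upwards [eventually_ge_atTop 1] with n hn
  exact (hkey n hn).symm
end

section
/- Let f be the unique real in (0,1) satisfying ln(1/f) = f/2. For each positive integer ℓ define g_ℓ(t) = 0 if t < ℓ·f, g_ℓ(t) = (t − ℓ·f)/ℓ if ℓ·f ≤ t < ℓ, and g_ℓ(t) = 1 − f if t ≥ ℓ, and define G(t) = 1.5·f − 1 + Σ_{ℓ=1}^∞ g_ℓ(t). Then for every real t ≥ 1, G(t) ≤ (f/2)·t. -/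
open Finset

private noncomputable def Hsum (n m : ℕ) : ℝ := ∑ ℓ ∈ Finset.Ico n m, (1 : ℝ) / (ℓ + 1)

private lemma Hsum_self (n : ℕ) : Hsum n n = 0 := by simp [Hsum]

private lemma Hsum_succ_top {n m : ℕ} (h : n ≤ m) :
    Hsum n (m + 1) = Hsum n m + 1 / ((m : ℝ) + 1) := by
  simp [Hsum, Finset.sum_Ico_succ_top h]

private lemma Hsum_succ_bot {n m : ℕ} (h : n < m) :
    Hsum n m = 1 / ((n : ℝ) + 1) + Hsum (n + 1) m := by
  simp [Hsum, Finset.sum_eq_sum_Ico_succ_bot h]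

private lemma log_mid {w : ℝ} (h0 : 0 < w) (h4 : w ≤ 1/4) :
    2 * w ≤ Real.log (1 + w) - Real.log (1 - w) := by
  have hw : |w| < 1 := by rw [abs_of_pos h0]; linarith
  have hw' : |(-w)| < 1 := by rwa [abs_neg]
  have A := Real.abs_log_sub_add_sum_range_le hw 3
  have B := Real.abs_log_sub_add_sum_range_le hw' 3
  simp only [Finset.sum_range_succ, Finset.sum_range_zero] at A B
  rw [abs_of_pos h0] at A
  rw [abs_neg, abs_of_pos h0] at B
  rw [abs_le] at A B
  obtain ⟨A1, A2⟩ := A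
  obtain ⟨B1, B2⟩ := B
  have hz : (0:ℝ) < 1 - w := by linarith
  have hE : w ^ 4 / (1 - w) ≤ w ^ 3 / 3 := by
    rw [div_le_div_iff₀ hz (by norm_num)]
    nlinarith [mul_nonneg (pow_pos h0 3).le (by linarith : (0:ℝ) ≤ 1 - 4*w)]
  norm_num at A1 A2 B1 B2 hE ⊢
  nlinarith [A2, B1, hE]

private lemma Hsum_le_log {n : ℕ} (hn : 1 ≤ n) {m : ℕ} (hm : n ≤ m) :
    Hsum n m ≤ Real.log (2 * (m:ℝ) + 1) - Real.log (2 * (n:ℝ) + 1) := by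
  induction m, hm using Nat.le_induction with
  | base => simp [Hsum_self]
  | succ m hm ih =>
    have hm1 : (1:ℝ) ≤ (m:ℝ) := by exact_mod_cast hn.trans hm
    have hstep : 1 / ((m:ℝ) + 1) ≤ Real.log (2*(m:ℝ) + 3) - Real.log (2*(m:ℝ) + 1) := by
      have hd : (0:ℝ) < 2 * (m:ℝ) + 2 := by linarith
      have h0 : (0:ℝ) < 1 / (2 * (m:ℝ) + 2) := by positivity
      have h4 : 1 / (2 * (m:ℝ) + 2) ≤ 1/4 := by
        rw [div_le_div_iff₀ hd (by norm_num)]; linarith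
      have hmid := log_mid h0 h4
      have e1 : 1 + 1 / (2 * (m:ℝ) + 2) = (2*(m:ℝ)+3) / (2*(m:ℝ)+2) := by
        field_simp; ring
      have e2 : 1 - 1 / (2 * (m:ℝ) + 2) = (2*(m:ℝ)+1) / (2*(m:ℝ)+2) := by
        field_simp; ring
      rw [e1, e2, Real.log_div (by positivity) (by positivity),
          Real.log_div (by positivity) (by positivity)] at hmid
      have e3 : 2 * (1 / (2 * (m:ℝ) + 2)) = 1 / ((m:ℝ)+1) := by
        rw [mul_one_div, div_eq_div_iff hd.ne' (by linarith : ((m:ℝ)+1) ≠ (0:ℝ))]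
        ring
      linarith [hmid, e3.le, e3.ge]
    rw [Hsum_succ_top hm]
    push_cast
    have e4 : (2:ℝ) * ((m:ℝ) + 1) + 1 = 2*(m:ℝ)+3 := by ring
    rw [e4]
    linarith [ih, hstep]

private lemma f_bounds {f : ℝ} (hf0 : 0 < f) (hf1 : f < 1) (hf : Real.log (1/f) = f/2) :
    Real.log f = -(f/2) ∧ 0.7 ≤ f ∧ f ≤ 0.708 := by
  have hlogf : Real.log f = -(f/2) := by
    rw [one_div, Real.log_inv] at hf; linarith
  have h7 : (0.7:ℝ) ≤ f := by
    by_contra hcon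
    push_neg at hcon
    have hlt : Real.log f < Real.log (7/10) := Real.log_lt_log hf0 (by linarith)
    have hb : Real.log (7/10 : ℝ) ≤ -0.3525 := by
      have habs : |(3/10 : ℝ)| = 3/10 := abs_of_pos (by norm_num)
      have T := Real.abs_log_sub_add_sum_range_le (x := 3/10) (by rw [habs]; norm_num) 4
      rw [abs_le, habs] at T
      obtain ⟨T1, T2⟩ := T
      norm_num [Finset.sum_range_succ] at T1 T2
      linarith
    rw [hlogf] at hlt
    linarith
  have h8 : f ≤ 0.708 := by
    by_contra hcon
    push_neg at hcon
    have hlt : Real.log (177/250 : ℝ) < Real.log f := Real.log_lt_log (by norm_num) (by linarith)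
    have hb : (-0.3478 : ℝ) ≤ Real.log (177/250 : ℝ) := by
      have habs : |(73/250 : ℝ)| = 73/250 := abs_of_pos (by norm_num)
      have T := Real.abs_log_sub_add_sum_range_le (x := 73/250) (by rw [habs]; norm_num) 4
      rw [abs_le, habs] at T
      obtain ⟨T1, T2⟩ := T
      norm_num [Finset.sum_range_succ] at T1 T2
      linarith
    rw [hlogf] at hlt
    linarith
  exact ⟨hlogf, h7, h8⟩

private lemma lemA {f : ℝ} (hf0 : 0 < f) (h7 : (0.7:ℝ) ≤ f) (h8 : f ≤ 0.708)
    (hlogf : Real.log f = -(f/2)) (k m : ℕ) (hk : 1 ≤ k) (hkm : k ≤ m) :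
    1.5*f - 1 + (k:ℝ)*(1-f) + (k:ℝ) * Hsum k m - f*((m:ℝ) - (k:ℝ)) - f/2*(k:ℝ) ≤ 0 := by
  have hk1 : (1:ℝ) ≤ (k:ℝ) := by exact_mod_cast hk
  have hkm' : (k:ℝ) ≤ (m:ℝ) := by exact_mod_cast hkm
  have hk20 : (0:ℝ) < 2*(k:ℝ)+1 := by linarith
  have hm20 : (0:ℝ) < 2*(m:ℝ)+1 := by linarith
  set u : ℝ := (2*(m:ℝ)+1) / (2*(k:ℝ)+1) with hu
  have hu1 : 1 ≤ u := by rw [hu, le_div_iff₀ hk20]; linarith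
  have hu0 : (0:ℝ) < u := by linarith
  have hueq : u * (2*(k:ℝ)+1) = 2*(m:ℝ)+1 := by
    rw [hu]; field_simp
  have hS : Hsum k m ≤ Real.log u := by
    rw [hu, Real.log_div hm20.ne' hk20.ne']
    exact Hsum_le_log hk hkm
  have hkS : (k:ℝ) * Hsum k m ≤ (k:ℝ) * Real.log u :=
    mul_le_mul_of_nonneg_left hS (by linarith)
  have hL1 : Real.log u ≤ u - 1 := Real.log_le_sub_one_of_pos hu0
  have hphi : 1 + Real.log u - f*u - f/2 ≤ 0 := by
    have ha : Real.log (f*u) ≤ f*u - 1 := Real.log_le_sub_one_of_pos (by positivity)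
    have hb : Real.log (f*u) = -(f/2) + Real.log u := by
      rw [Real.log_mul hf0.ne' hu0.ne', hlogf]
    linarith
  have hphik : ((k:ℝ) - 1) * (1 + Real.log u - f*u - f/2) ≤ 0 :=
    mul_nonpos_of_nonneg_of_nonpos (by linarith) hphi
  have hueqf : f * (2*(m:ℝ)+1) = f * (u * (2*(k:ℝ)+1)) := by rw [hueq]
  have hrho : 0 ≤ (3*f/2 - 1) * (u - 1) := mul_nonneg (by linarith) (by linarith)
  nlinarith [hkS, hphik, hueqf, hL1, hrho]

private lemma Hsum12 : Hsum 1 2 = 1/2 := by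
  rw [Hsum, show Finset.Ico 1 2 = {1} from by decide, Finset.sum_singleton]; norm_num

private lemma Hsum23 : Hsum 2 3 = 1/3 := by
  rw [Hsum, show Finset.Ico 2 3 = {2} from by decide, Finset.sum_singleton]; norm_num

private lemma Hsum24 : Hsum 2 4 = 1/3 + 1/4 := by
  rw [Hsum, show Finset.Ico 2 4 = {2, 3} from by decide,
    Finset.sum_insert (by decide), Finset.sum_singleton]; norm_num

private lemma Hsum35 : Hsum 3 5 = 1/4 + 1/5 := by
  rw [Hsum, show Finset.Ico 3 5 = {3, 4} from by decide,
    Finset.sum_insert (by decide), Finset.sum_singleton]; norm_num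

private lemma Hsum46 : Hsum 4 6 = 1/5 + 1/6 := by
  rw [Hsum, show Finset.Ico 4 6 = {4, 5} from by decide,
    Finset.sum_insert (by decide), Finset.sum_singleton]; norm_num

private lemma Hsum47 : Hsum 4 7 = 1/5 + 1/6 + 1/7 := by
  rw [Hsum, show Finset.Ico 4 7 = {4, 5, 6} from by decide,
    Finset.sum_insert (by decide), Finset.sum_insert (by decide), Finset.sum_singleton]
  norm_num

set_option maxHeartbeats 1000000 in
private lemma lemB {f : ℝ} (hf0 : 0 < f) (hf1 : f < 1) (h7 : (0.7:ℝ) ≤ f) (h8 : f ≤ 0.708)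
    (hlogf : Real.log f = -(f/2)) (k n : ℕ) (hn : 1 ≤ n)
    (h1 : (n:ℝ) ≤ (k:ℝ)*f) (h2 : (k:ℝ)*f ≤ (n:ℝ)+1) :
    1.5*f - 1 + (n:ℝ)*(1-f) + ((k:ℝ)*f) * Hsum n k - f*((k:ℝ) - (n:ℝ)) - f^2/2*(k:ℝ) ≤ 0 := by
  have hn1 : (1:ℝ) ≤ (n:ℝ) := by exact_mod_cast hn
  have hk0 : 0 < k := by
    by_contra hcon
    push_neg at hcon
    interval_cases k
    push_cast at h1
    linarith
  have hk0' : (0:ℝ) < (k:ℝ) := by exact_mod_cast hk0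
  have hnk : n < k := by
    have : (n:ℝ) < (k:ℝ) := by nlinarith
    exact_mod_cast this
  by_cases hn4 : n ≤ 4
  · -- small cases: enumerate n and k
    have hkub : (k:ℝ) * 0.7 ≤ (n:ℝ) + 1 := by nlinarith
    have hklb : (n:ℝ) ≤ (k:ℝ) * 0.708 := by nlinarith
    interval_cases n
    · -- n = 1 : k = 2
      have : k < 3 := by
        have : (k:ℝ) < 3 := by linarith
        exact_mod_cast this
      have : 2 ≤ k := by
        have : (1:ℝ) < (k:ℝ) := by nlinarith
        have : 1 < k := by exact_mod_cast this
        omega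
      interval_cases k
      rw [Hsum12]; push_cast; nlinarith [sq_nonneg (f - 0.7)]
    · -- n = 2 : k ∈ {3, 4}
      have : k < 5 := by
        have : (k:ℝ) < 5 := by linarith
        exact_mod_cast this
      have : 3 ≤ k := by
        have : (2:ℝ) < (k:ℝ) := by nlinarith
        have : 2 < k := by exact_mod_cast this
        omega
      interval_cases k
      · rw [Hsum23]; push_cast; nlinarith [sq_nonneg (f - 0.7)]
      · rw [Hsum24]; push_cast; nlinarith [sq_nonneg (f - 0.7)]
    · -- n = 3 : k = 5
      have : k < 6 := by
        have : (k:ℝ) < 6 := by linarith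
        exact_mod_cast this
      have : 5 ≤ k := by
        have : (4:ℝ) < (k:ℝ) := by nlinarith
        have : 4 < k := by exact_mod_cast this
        omega
      interval_cases k
      rw [Hsum35]; push_cast; nlinarith [sq_nonneg (f - 0.7)]
    · -- n = 4 : k ∈ {6, 7}
      have : k < 8 := by
        have : (k:ℝ) < 8 := by linarith
        exact_mod_cast this
      have : 6 ≤ k := by
        have : (5:ℝ) < (k:ℝ) := by nlinarith
        have : 5 < k := by exact_mod_cast this
        omega
      interval_cases k
      · rw [Hsum46]; push_cast; nlinarith [sq_nonneg (f - 0.7)]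
      · rw [Hsum47]; push_cast; nlinarith [sq_nonneg (f - 0.7)]
  · -- general case n ≥ 5
    push_neg at hn4
    have hn5 : (5:ℝ) ≤ (n:ℝ) := by exact_mod_cast hn4
    have hn20 : (0:ℝ) < 2*(n:ℝ)+1 := by linarith
    have hk20 : (0:ℝ) < 2*(k:ℝ)+1 := by linarith
    set v : ℝ := (2*(k:ℝ)+1) / (2*(n:ℝ)+1) with hv
    have hv0 : (0:ℝ) < v := by rw [hv]; positivity
    have hS : Hsum n k ≤ f*v - 1 + f/2 := by
      have hH := Hsum_le_log hn hnk.le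
      have ha : Real.log (f*v) ≤ f*v - 1 := Real.log_le_sub_one_of_pos (by positivity)
      have hb : Real.log (f*v) = -(f/2) + Real.log v := by
        rw [Real.log_mul hf0.ne' hv0.ne', hlogf]
      have hc : Real.log v = Real.log (2*(k:ℝ)+1) - Real.log (2*(n:ℝ)+1) := by
        rw [hv, Real.log_div hk20.ne' hn20.ne']
      linarith
    have hmain : ((k:ℝ)*f) * Hsum n k ≤ ((k:ℝ)*f) * (f*v - 1 + f/2) :=
      mul_le_mul_of_nonneg_left hS (by positivity)
    have hpoly : 1.5*f - 1 + (n:ℝ)*(1-f) + ((k:ℝ)*f) * (f*v - 1 + f/2)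
          - f*((k:ℝ) - (n:ℝ)) - f^2/2*(k:ℝ)
        = (2*((k:ℝ)*f - (n:ℝ))^2 + ((k:ℝ)*f - (n:ℝ))*f - 2*((k:ℝ)*f - (n:ℝ))
            + 4*(n:ℝ)*f + 1.5*f - 3*(n:ℝ) - 1) / (2*(n:ℝ)+1) := by
      rw [hv]
      field_simp
      ring
    have hnum : 2*((k:ℝ)*f - (n:ℝ))^2 + ((k:ℝ)*f - (n:ℝ))*f - 2*((k:ℝ)*f - (n:ℝ))
        + 4*(n:ℝ)*f + 1.5*f - 3*(n:ℝ) - 1 ≤ 0 := by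
      nlinarith [mul_nonneg (by linarith : (0:ℝ) ≤ (k:ℝ)*f - (n:ℝ))
                   (by linarith : (0:ℝ) ≤ 1 - ((k:ℝ)*f - (n:ℝ))),
                 mul_nonneg hf0.le (by linarith : (0:ℝ) ≤ 1 - ((k:ℝ)*f - (n:ℝ))),
                 mul_nonneg (by linarith : (0:ℝ) ≤ (n:ℝ) - 5)
                   (by linarith : (0:ℝ) ≤ 3 - 4*f)]
    have hfin := hpoly ▸ (div_nonpos_of_nonpos_of_nonneg hnum hn20.le)
    linarith

set_option maxHeartbeats 1000000 in
/-- Main analytic claim of Appendix A of the paper (Theorem 9): the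
over-approximated total demand bound function `G(t)` never exceeds `(f/2)·t`
for `t ≥ 1`, where `f ∈ (0,1)` is the unique root of `ln(1/f) = f/2`. -/
theorem stmt_17
    (f : ℝ) (hf0 : 0 < f) (hf1 : f < 1)
    (hf : Real.log (1 / f) = f / 2)
    (g : ℕ → ℝ → ℝ)
    (hg : ∀ ℓ : ℕ, 1 ≤ ℓ → ∀ t : ℝ,
      g ℓ t = if t < ℓ * f then 0 else if t < ℓ then (t - ℓ * f) / ℓ else 1 - f)
    (G : ℝ → ℝ)
    (hG : ∀ t : ℝ, G t = 1.5 * f - 1 + ∑' ℓ : ℕ, g (ℓ + 1) t) :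
    ∀ t : ℝ, 1 ≤ t → G t ≤ (f / 2) * t := by
  obtain ⟨hlogf, h7, h8⟩ := f_bounds hf0 hf1 hf
  intro t ht
  have ht0 : (0:ℝ) ≤ t := by linarith
  set n : ℕ := ⌊t⌋₊ with hndef
  set m : ℕ := ⌊t/f⌋₊ with hmdef
  have hn1 : 1 ≤ n := Nat.le_floor (by push_cast; linarith)
  have hn1' : (1:ℝ) ≤ (n:ℝ) := by exact_mod_cast hn1
  have hnt : (n:ℝ) ≤ t := Nat.floor_le ht0
  have htn : t < (n:ℝ) + 1 := Nat.lt_floor_add_one t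
  have htf0 : (0:ℝ) ≤ t/f := div_nonneg ht0 hf0.le
  have hmtf : (m:ℝ) ≤ t/f := Nat.floor_le htf0
  have hmf : (m:ℝ)*f ≤ t := (le_div_iff₀ hf0).1 hmtf
  have htm : t < ((m:ℝ)+1)*f := by
    have h := Nat.lt_floor_add_one (t/f)
    calc t = (t/f)*f := by field_simp
    _ < ((m:ℝ)+1)*f := by
        apply mul_lt_mul_of_pos_right _ hf0
        exact_mod_cast h
  have hnm : n ≤ m := by
    apply Nat.floor_mono
    rw [le_div_iff₀ hf0]
    nlinarith
  have hnm' : (n:ℝ) ≤ (m:ℝ) := by exact_mod_cast hnm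
  -- evaluate the tsum
  have hts : ∑' ℓ : ℕ, g (ℓ + 1) t = ∑ ℓ ∈ Finset.range m, g (ℓ + 1) t := by
    apply tsum_eq_sum
    intro ℓ hℓ
    have hml : m ≤ ℓ := by simpa using hℓ
    have hml' : ((m:ℝ)+1) ≤ ((ℓ:ℝ)+1) := by
      have : (m:ℝ) ≤ (ℓ:ℝ) := by exact_mod_cast hml
      linarith
    rw [hg (ℓ+1) (by omega) t, if_pos]
    push_cast
    nlinarith
  -- evaluate the two parts of the sum
  have hs1 : ∑ ℓ ∈ Finset.range n, g (ℓ + 1) t = (n:ℝ)*(1-f) := by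
    have hterm : ∀ ℓ ∈ Finset.range n, g (ℓ + 1) t = 1 - f := by
      intro ℓ hℓ
      have hl : ℓ + 1 ≤ n := Finset.mem_range.1 hℓ
      have hl' : ((ℓ:ℝ)+1) ≤ (n:ℝ) := by exact_mod_cast hl
      have hl0 : (0:ℝ) ≤ (ℓ:ℝ)+1 := by positivity
      rw [hg (ℓ+1) (by omega) t, if_neg, if_neg]
      · push_cast; linarith
      · push_cast; nlinarith
    rw [Finset.sum_congr rfl hterm, Finset.sum_const, Finset.card_range, nsmul_eq_mul]
  have hs2 : ∑ ℓ ∈ Finset.Ico n m, g (ℓ + 1) t = t * Hsum n m - f*((m:ℝ) - (n:ℝ)) := by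
    have hterm : ∀ ℓ ∈ Finset.Ico n m, g (ℓ + 1) t = t * (1/((ℓ:ℝ)+1)) - f := by
      intro ℓ hℓ
      obtain ⟨hl1, hl2⟩ := Finset.mem_Ico.1 hℓ
      have hl1' : (n:ℝ) ≤ (ℓ:ℝ) := by exact_mod_cast hl1
      have hl2' : ((ℓ:ℝ)+1) ≤ (m:ℝ) := by exact_mod_cast hl2
      have hl0 : (0:ℝ) < (ℓ:ℝ)+1 := by positivity
      rw [hg (ℓ+1) (by omega) t, if_neg, if_pos]
      · push_cast
        rw [sub_div, mul_div_assoc']  -- (t - (ℓ+1)f)/(ℓ+1) = t/(ℓ+1) - f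
        rw [mul_comm ((ℓ:ℝ)+1) f, mul_div_assoc, div_self hl0.ne', mul_one]
        ring
      · push_cast; linarith
      · push_cast; nlinarith
    rw [Finset.sum_congr rfl hterm, Finset.sum_sub_distrib, ← Finset.mul_sum,
      Finset.sum_const, Nat.card_Ico, nsmul_eq_mul]
    rw [Nat.cast_sub hnm, Hsum]
    ring
  have hGt : G t = 1.5*f - 1 + ((n:ℝ)*(1-f) + (t * Hsum n m - f*((m:ℝ) - (n:ℝ)))) := by
    rw [hG t, hts, ← Finset.sum_range_add_sum_Ico _ hnm, hs1, hs2]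
  rw [hGt]
  set S : ℝ := Hsum n m with hSdef
  rcases le_or_gt S (f/2) with hS | hS
  · have key := lemA hf0 h7 h8 hlogf n m hn1 hnm
    rw [← hSdef] at key
    have hprod : (t - (n:ℝ))*(S - f/2) ≤ 0 :=
      mul_nonpos_of_nonneg_of_nonpos (by linarith) (by linarith)
    nlinarith [key, hprod]
  · rcases le_or_gt (((m:ℝ)+1)*f) ((n:ℝ)+1) with hc | hc
    · have key := lemB hf0 hf1 h7 h8 hlogf (m+1) n hn1
        (by push_cast; linarith) (by push_cast; linarith)
      rw [Hsum_succ_top hnm, ← hSdef] at key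
      push_cast at key
      have hminv : ((m:ℝ)+1)*(1/((m:ℝ)+1)) = 1 := by
        field_simp
      have hprod : (t - ((m:ℝ)+1)*f)*(S - f/2) ≤ 0 :=
        mul_nonpos_of_nonpos_of_nonneg (by linarith) (by linarith)
      nlinarith [key, hprod, hminv]
    · have hmn1 : n + 1 ≤ m := by
        have h1 : (n:ℝ)+1 < (m:ℝ)+1 := by nlinarith
        have : n + 1 < m + 1 := by exact_mod_cast h1
        omega
      have key := lemA hf0 h7 h8 hlogf (n+1) m (by omega) hmn1
      have hsb : S = 1/((n:ℝ)+1) + Hsum (n+1) m := Hsum_succ_bot (by omega)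
      have he : Hsum (n+1) m = S - 1/((n:ℝ)+1) := by rw [hsb]; ring
      rw [he] at key
      push_cast at key
      have hninv : ((n:ℝ)+1)*(1/((n:ℝ)+1)) = 1 := by
        field_simp
      have hprod : (t - ((n:ℝ)+1))*(S - f/2) ≤ 0 :=
        mul_nonpos_of_nonpos_of_nonneg (by linarith) (by linarith)
      nlinarith [key, hprod, hninv]
end

section
/- Let f be the unique real in (0,1) satisfying ln(1/f) = f/2. For each positive integer ℓ define g_ℓ(t) = 0 if t < ℓ·f, g_ℓ(t) = (t − ℓ·f)/ℓ if ℓ·f ≤ t < ℓ, and g_ℓ(t) = 1 − f if t ≥ ℓ, and define G(t) = 1.5·f − 1 + Σ_{ℓ=1}^∞ g_ℓ(t). Then for every positive integer ℓ and every real t with ℓ ≤ t ≤ ℓ + 1, G(t)/t ≤ max{ G(ℓ)/ℓ, G(ℓ+1)/(ℓ+1) }. -/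
/-- Piecewise-linear maximization claim of Appendix A of the paper: on each
interval `[ℓ, ℓ+1]` the maximum of `G(t)/t` is attained at an integer
endpoint, where `f ∈ (0,1)` is the unique root of `ln(1/f) = f/2`. -/
theorem stmt_18
    (f : ℝ) (hf0 : 0 < f) (hf1 : f < 1)
    (hf : Real.log (1 / f) = f / 2)
    (g : ℕ → ℝ → ℝ)
    (hg : ∀ ℓ : ℕ, 1 ≤ ℓ → ∀ t : ℝ,
      g ℓ t = if t < ℓ * f then 0 else if t < ℓ then (t - ℓ * f) / ℓ else 1 - f)
    (G : ℝ → ℝ)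
    (hG : ∀ t : ℝ, G t = 1.5 * f - 1 + ∑' ℓ : ℕ, g (ℓ + 1) t) :
    ∀ ℓ : ℕ, 1 ≤ ℓ → ∀ t : ℝ, (ℓ : ℝ) ≤ t → t ≤ (ℓ : ℝ) + 1 →
      G t / t ≤ max (G (ℓ : ℝ) / (ℓ : ℝ)) (G ((ℓ : ℝ) + 1) / ((ℓ : ℝ) + 1)) := by
  intro ℓ hℓ t ht1 ht2
  -- summability: finite support
  have hsum : ∀ s : ℝ, Summable (fun k : ℕ => g (k + 1) s) := by
    intro s
    apply summable_of_ne_finset_zero (s := Finset.range (⌈s / f⌉₊ + 1))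
    intro k hk
    rw [Finset.mem_range, not_lt] at hk
    rw [hg (k + 1) (by omega)]
    have h1 : s / f ≤ (k : ℝ) := le_trans (Nat.le_ceil _) (by exact_mod_cast le_of_lt hk)
    have h2 : s ≤ (k : ℝ) * f := by
      rw [div_le_iff₀ hf0] at h1; exact h1
    have h3 : s < ((k + 1 : ℕ) : ℝ) * f := by
      push_cast; nlinarith
    rw [if_pos h3]
  set lam : ℝ := t - (ℓ : ℝ) with hlam
  clear_value lam
  have hlam0 : 0 ≤ lam := by linarith
  have hlam1 : lam ≤ 1 := by linarith
  have hℓpos : (0 : ℝ) < (ℓ : ℝ) := by exact_mod_cast hℓ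
  -- per-term convexity inequality
  have hkey : ∀ k : ℕ, g (k + 1) t ≤
      (1 - lam) * g (k + 1) (ℓ : ℝ) + lam * g (k + 1) ((ℓ : ℝ) + 1) := by
    intro k
    by_cases hk : k + 1 ≤ ℓ
    · -- all three values equal 1 - f
      have hkl : ((k + 1 : ℕ) : ℝ) ≤ (ℓ : ℝ) := by exact_mod_cast hk
      have hm : (0 : ℝ) < ((k + 1 : ℕ) : ℝ) := by positivity
      have hval : ∀ s : ℝ, (ℓ : ℝ) ≤ s → g (k + 1) s = 1 - f := by
        intro s hs
        rw [hg (k + 1) (by omega)]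
        have h1 : ¬ s < ((k + 1 : ℕ) : ℝ) * f := by
          push_neg; nlinarith
        have h2 : ¬ s < ((k + 1 : ℕ) : ℝ) := by push_neg; linarith
        rw [if_neg h1, if_neg h2]
      rw [hval t ht1, hval (ℓ : ℝ) le_rfl, hval ((ℓ : ℝ) + 1) (by linarith)]
      nlinarith
    · -- k + 1 ≥ ℓ + 1 : each value is max 0 ((s - m f)/m)
      have hk' : ℓ + 1 ≤ k + 1 := by omega
      have hkl : (ℓ : ℝ) + 1 ≤ ((k + 1 : ℕ) : ℝ) := by exact_mod_cast hk'
      set m : ℝ := ((k + 1 : ℕ) : ℝ) with hm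
      have hmpos : (0 : ℝ) < m := by positivity
      have hval : ∀ s : ℝ, s ≤ m → g (k + 1) s = max 0 ((s - m * f) / m) := by
        intro s hs
        rw [hg (k + 1) (by omega)]
        split_ifs with h1 h2
        · rw [max_eq_left]
          apply le_of_lt
          apply div_neg_of_neg_of_pos _ hmpos
          linarith
        · rw [max_eq_right]
          apply div_nonneg _ (le_of_lt hmpos)
          linarith
        · have hsm : s = m := le_antisymm hs (not_lt.mp h2)
          rw [hsm, max_eq_right]
          · field_simp
          · apply div_nonneg _ (le_of_lt hmpos)
            nlinarith
      rw [hval t (by linarith), hval (ℓ : ℝ) (by linarith), hval ((ℓ : ℝ) + 1) hkl]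
      set A : ℝ := max 0 (((ℓ : ℝ) - m * f) / m) with hA
      set B : ℝ := max 0 (((ℓ : ℝ) + 1 - m * f) / m) with hB
      have hA0 : 0 ≤ A := le_max_left _ _
      have hB0 : 0 ≤ B := le_max_left _ _
      have hA1 : ((ℓ : ℝ) - m * f) / m ≤ A := le_max_right _ _
      have hB1 : ((ℓ : ℝ) + 1 - m * f) / m ≤ B := le_max_right _ _
      apply max_le
      · nlinarith
      · have heq : (t - m * f) / m
            = (1 - lam) * (((ℓ : ℝ) - m * f) / m) + lam * (((ℓ : ℝ) + 1 - m * f) / m) := by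
          field_simp
          linarith
        rw [heq]
        nlinarith
  -- sum the inequalities
  have hS : (∑' k : ℕ, g (k + 1) t)
      ≤ (1 - lam) * (∑' k : ℕ, g (k + 1) (ℓ : ℝ)) + lam * (∑' k : ℕ, g (k + 1) ((ℓ : ℝ) + 1)) := by
    have h1 := Summable.tsum_le_tsum hkey (hsum t)
      (((hsum (ℓ : ℝ)).mul_left (1 - lam)).add ((hsum ((ℓ : ℝ) + 1)).mul_left lam))
    rwa [Summable.tsum_add ((hsum _).mul_left _) ((hsum _).mul_left _), tsum_mul_left, tsum_mul_left] at h1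
  have hGt : G t ≤ (1 - lam) * G (ℓ : ℝ) + lam * G ((ℓ : ℝ) + 1) := by
    rw [hG t, hG (ℓ : ℝ), hG ((ℓ : ℝ) + 1)]
    set c : ℝ := 1.5 * f - 1
    set S1 : ℝ := ∑' k : ℕ, g (k + 1) (ℓ : ℝ)
    set S2 : ℝ := ∑' k : ℕ, g (k + 1) ((ℓ : ℝ) + 1)
    have hrw : (1 - lam) * (c + S1) + lam * (c + S2)
        = c + ((1 - lam) * S1 + lam * S2) := by ring
    rw [hrw]
    linarith
  set M : ℝ := max (G (ℓ : ℝ) / (ℓ : ℝ)) (G ((ℓ : ℝ) + 1) / ((ℓ : ℝ) + 1)) with hM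
  have h1 : G (ℓ : ℝ) ≤ M * (ℓ : ℝ) := by
    rw [← div_le_iff₀ hℓpos]; exact le_max_left _ _
  have h2 : G ((ℓ : ℝ) + 1) ≤ M * ((ℓ : ℝ) + 1) := by
    rw [← div_le_iff₀ (by linarith)]; exact le_max_right _ _
  have htpos : (0 : ℝ) < t := by linarith
  rw [div_le_iff₀ htpos]
  have : (1 - lam) * (M * (ℓ : ℝ)) + lam * (M * ((ℓ : ℝ) + 1)) = M * t := by
    rw [hlam]; ring
  nlinarith
end
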